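/- arXiv:1103.4884 — 5 statements merged into one kernel-verified Lean document; each statement's English description precedes it below -/
import Mathlib

section
/- A binary m×n matrix M is a lonesum matrix if and only if no 2×2 submatrix of M (obtained by choosing two rows i1 < i2 and two columns j1 < j2) equals (1 0; 0 1) or (0 1; 1 0). -/
/-- A `q`-ary `m×n` matrix `M` is a lonesum matrix if it is uniquely determined
by its row and column sums. -/
def IsLonesum {q m n : ℕ} (M : Fin m → Fin n → Fin q) : Prop :=
  ∀ N : Fin m → Fin n → Fin q,
    (∀ i, ∑ j, (N i j : ℕ) = ∑ j, (M i j : ℕ)) →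
    (∀ j, ∑ i, (N i j : ℕ) = ∑ i, (M i j : ℕ)) →
    N = M

lemma fin2_cases (x : Fin 2) : x = 0 ∨ x = 1 := by fin_cases x <;> simp

lemma sum_two_swap {k : ℕ} (f g : Fin k → ℕ) (a b : Fin k) (hab : a ≠ b)
    (h : ∀ j, j ≠ a → j ≠ b → f j = g j) (hval : f a + f b = g a + g b) :
    ∑ j, f j = ∑ j, g j := by
  have ha : a ∈ (Finset.univ : Finset (Fin k)) := Finset.mem_univ a
  have hb : b ∈ (Finset.univ : Finset (Fin k)).erase a :=
    Finset.mem_erase.2 ⟨fun hh => hab hh.symm, Finset.mem_univ b⟩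
  rw [← Finset.add_sum_erase _ f ha, ← Finset.add_sum_erase _ f hb,
      ← Finset.add_sum_erase _ g ha, ← Finset.add_sum_erase _ g hb]
  have hrest : ∑ j ∈ ((Finset.univ : Finset (Fin k)).erase a).erase b, f j
      = ∑ j ∈ ((Finset.univ : Finset (Fin k)).erase a).erase b, g j := by
    apply Finset.sum_congr rfl
    intro j hj
    simp only [Finset.mem_erase] at hj
    exact h j hj.2.1 hj.1
  omega

/-- A binary matrix is a lonesum matrix if and only if no `2×2` submatrix
equals `(1 0; 0 1)` or `(0 1; 1 0)`. -/
theorem binary_lonesum_iff_no_forbidden_submatrix (m n : ℕ) (M : Fin m → Fin n → Fin 2) :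
    IsLonesum M ↔
      ∀ (i1 i2 : Fin m) (j1 j2 : Fin n), i1 < i2 → j1 < j2 →
        ¬((M i1 j1 = 1 ∧ M i1 j2 = 0 ∧ M i2 j1 = 0 ∧ M i2 j2 = 1) ∨
          (M i1 j1 = 0 ∧ M i1 j2 = 1 ∧ M i2 j1 = 1 ∧ M i2 j2 = 0)) := by
  constructor
  · -- forward: lonesum implies no forbidden submatrix
    intro hM i1 i2 j1 j2 hi hj hpat
    have hnei : i1 ≠ i2 := ne_of_lt hi
    have hnej : j1 ≠ j2 := ne_of_lt hj
    set N : Fin m → Fin n → Fin 2 := fun i j =>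
      if (i = i1 ∨ i = i2) ∧ (j = j1 ∨ j = j2) then (if M i j = 0 then 1 else 0) else M i j
      with hN
    have hrow : ∀ i, ∑ j, (N i j : ℕ) = ∑ j, (M i j : ℕ) := by
      intro i
      by_cases hi1 : i = i1 ∨ i = i2
      · apply sum_two_swap _ _ j1 j2 hnej
        · intro j hj1 hj2; simp [hN, hj1, hj2]
        · rcases hpat with ⟨h11,h12,h21,h22⟩|⟨h11,h12,h21,h22⟩ <;>
            rcases hi1 with rfl|rfl <;>
            simp [hN, h11, h12, h21, h22]
      · push_neg at hi1
        apply Finset.sum_congr rfl; intro j _; simp [hN, hi1.1, hi1.2]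
    have hcol : ∀ j, ∑ i, (N i j : ℕ) = ∑ i, (M i j : ℕ) := by
      intro j
      by_cases hj1 : j = j1 ∨ j = j2
      · apply sum_two_swap _ _ i1 i2 hnei
        · intro i h1 h2; simp [hN, h1, h2]
        · rcases hpat with ⟨h11,h12,h21,h22⟩|⟨h11,h12,h21,h22⟩ <;>
            rcases hj1 with rfl|rfl <;>
            simp [hN, h11, h12, h21, h22]
      · push_neg at hj1
        apply Finset.sum_congr rfl; intro i _; simp [hN, hj1.1, hj1.2]
    have hEq := congrFun (congrFun (hM N hrow hcol) i1) j1
    rcases fin2_cases (M i1 j1) with h|h <;> simp [hN, h] at hEq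
  · -- backward: no forbidden submatrix implies lonesum
    intro hyp
    -- symmetric no-switch lemma
    have L : ∀ (i i' : Fin m) (j j' : Fin n), M i j = 1 → M i' j' = 1 →
        M i' j = 1 ∨ M i j' = 1 := by
      intro i i' j j' h1 h2
      by_contra hcon
      push_neg at hcon
      obtain ⟨ha, hb⟩ := hcon
      have ha0 : M i' j = 0 := (fin2_cases _).resolve_right ha
      have hb0 : M i j' = 0 := (fin2_cases _).resolve_right hb
      rcases lt_trichotomy i i' with hii | rfl | hii
      · rcases lt_trichotomy j j' with hjj | rfl | hjj
        · exact hyp i i' j j' hii hjj (Or.inl ⟨h1, hb0, ha0, h2⟩)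
        · rw [h1] at hb0; exact absurd hb0 (by decide)
        · exact hyp i i' j' j hii hjj (Or.inr ⟨hb0, h1, h2, ha0⟩)
      · rw [h1] at ha0; exact absurd ha0 (by decide)
      · rcases lt_trichotomy j j' with hjj | rfl | hjj
        · exact hyp i' i j j' hii hjj (Or.inr ⟨ha0, h2, h1, hb0⟩)
        · rw [h2] at ha0; exact absurd ha0 (by decide)
        · exact hyp i' i j' j hii hjj (Or.inl ⟨h2, ha0, hb0, h1⟩)
    set r : Fin m → ℕ := fun i => ∑ j, (M i j : ℕ) with hr
    set c : Fin n → ℕ := fun j => ∑ i, (M i j : ℕ) with hc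
    set g : Fin m → ℕ := fun i => (Finset.univ.filter fun i' => r i ≤ r i').card with hg
    -- support nesting: larger row sum means larger support
    have hmono : ∀ i i', r i ≤ r i' → ∀ j, M i j = 1 → M i' j = 1 := by
      intro i i' hle j hj
      by_contra h0
      have h0 : M i' j = 0 := (fin2_cases _).resolve_right h0
      have hpt : ∀ j', (M i' j' : ℕ) ≤ (M i j' : ℕ) := by
        intro j'
        rcases fin2_cases (M i' j') with h | h
        · simp [h]
        · rcases L i i' j j' hj h with h' | h'
          · rw [h'] at h0; exact absurd h0 (by decide)
          · simp [h, h']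
      have hlt : r i' < r i := by
        apply Finset.sum_lt_sum (fun j' _ => hpt j')
        exact ⟨j, Finset.mem_univ j, by simp [h0, hj]⟩
      omega
    -- column sum as cardinality
    have hccard : ∀ j, c j = (Finset.univ.filter fun i => M i j = 1).card := by
      intro j
      rw [hc]
      simp only
      rw [Finset.card_filter]
      apply Finset.sum_congr rfl
      intro i _
      rcases fin2_cases (M i j) with h | h <;> simp [h]
    -- characterization of entries via margins
    have hiff : ∀ i j, M i j = 1 ↔ g i ≤ c j := by
      intro i j
      constructor
      · intro h1
        rw [hccard, hg]
        apply Finset.card_le_card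
        intro i' hi'
        simp only [Finset.mem_filter, Finset.mem_univ, true_and] at hi' ⊢
        exact hmono i i' hi' j h1
      · intro hle
        by_contra h0
        have h0 : M i j = 0 := (fin2_cases _).resolve_right h0
        have hsub : (Finset.univ.filter fun i' => M i' j = 1) ⊆
            (Finset.univ.filter fun i' => r i ≤ r i') := by
          intro i' hi'
          simp only [Finset.mem_filter, Finset.mem_univ, true_and] at hi' ⊢
          by_contra hnot
          have : M i j = 1 := hmono i' i (le_of_not_ge hnot) j hi'
          rw [this] at h0; exact absurd h0 (by decide)
        have hss : (Finset.univ.filter fun i' => M i' j = 1) ⊂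
            (Finset.univ.filter fun i' => r i ≤ r i') := by
          refine ⟨hsub, fun hback => ?_⟩
          have : i ∈ (Finset.univ.filter fun i' => M i' j = 1) := by
            apply hback
            simp
          simp only [Finset.mem_filter] at this
          rw [this.2] at h0; exact absurd h0 (by decide)
        have := Finset.card_lt_card hss
        rw [hccard] at hle
        rw [hg] at hle
        simp only at hle this
        omega
    -- odd weights separating the entries
    set w : Fin m → Fin n → ℤ := fun i j => 2 * (c j : ℤ) + (1 - 2 * (g i : ℤ)) with hw
    have hwpos : ∀ i j, M i j = 1 → 0 < w i j := by
      intro i j h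
      have := (hiff i j).1 h
      simp only [hw]
      omega
    have hwneg : ∀ i j, M i j = 0 → w i j < 0 := by
      intro i j h
      have : ¬ (g i ≤ c j) := fun hle => by
        have := (hiff i j).2 hle; rw [this] at h; exact absurd h (by decide)
      simp only [hw]
      omega
    intro N hrow hcol
    -- the weighted sum depends only on the margins
    have expand : ∀ X : Fin m → Fin n → Fin 2,
        ∑ i, ∑ j, ((X i j : ℕ) : ℤ) * w i j
        = ∑ i, (1 - 2 * (g i : ℤ)) * ∑ j, ((X i j : ℕ) : ℤ)
          + ∑ j, (2 * (c j : ℤ)) * ∑ i, ((X i j : ℕ) : ℤ) := by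
      intro X
      have : ∀ i j, ((X i j : ℕ) : ℤ) * w i j
          = (1 - 2 * (g i : ℤ)) * ((X i j : ℕ) : ℤ)
            + (2 * (c j : ℤ)) * ((X i j : ℕ) : ℤ) := by
        intro i j; simp only [hw]; ring
      simp only [this, Finset.sum_add_distrib, Finset.mul_sum]
      congr 1
      rw [Finset.sum_comm]
    have hSN : ∑ i, ∑ j, ((N i j : ℕ) : ℤ) * w i j
        = ∑ i, ∑ j, ((M i j : ℕ) : ℤ) * w i j := by
      rw [expand, expand]
      congr 1
      · apply Finset.sum_congr rfl; intro i _
        congr 1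
        rw [← Nat.cast_sum, ← Nat.cast_sum, hrow i]
      · apply Finset.sum_congr rfl; intro j _
        congr 1
        rw [← Nat.cast_sum, ← Nat.cast_sum, hcol j]
    -- `M` maximizes each term
    have hterm : ∀ i j, ((N i j : ℕ) : ℤ) * w i j ≤ ((M i j : ℕ) : ℤ) * w i j := by
      intro i j
      have hNv : ((N i j : ℕ) : ℤ) = 0 ∨ ((N i j : ℕ) : ℤ) = 1 := by
        rcases fin2_cases (N i j) with h | h <;> simp [h]
      rcases fin2_cases (M i j) with h | h
      · have hwn := hwneg i j h
        rcases hNv with h' | h' <;> simp [h, h'] <;> omega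
      · have hwp := hwpos i j h
        rcases hNv with h' | h' <;> simp [h, h'] <;> omega
    -- hence every term is equal
    have hzero : ∑ i, ∑ j,
        (((M i j : ℕ) : ℤ) * w i j - ((N i j : ℕ) : ℤ) * w i j) = 0 := by
      simp only [Finset.sum_sub_distrib]
      omega
    have hnn : ∀ i ∈ (Finset.univ : Finset (Fin m)),
        0 ≤ ∑ j, (((M i j : ℕ) : ℤ) * w i j - ((N i j : ℕ) : ℤ) * w i j) := by
      intro i _
      apply Finset.sum_nonneg
      intro j _
      have := hterm i j
      omega
    have hrows0 := (Finset.sum_eq_zero_iff_of_nonneg hnn).1 hzero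
    funext i j
    have hi0 := hrows0 i (Finset.mem_univ i)
    have hnn2 : ∀ j ∈ (Finset.univ : Finset (Fin n)),
        0 ≤ ((M i j : ℕ) : ℤ) * w i j - ((N i j : ℕ) : ℤ) * w i j := by
      intro j _; have := hterm i j; omega
    have hj0 := (Finset.sum_eq_zero_iff_of_nonneg hnn2).1 hi0 j (Finset.mem_univ j)
    have hwne : w i j ≠ 0 := by
      rcases fin2_cases (M i j) with h | h
      · have := hwneg i j h; omega
      · have := hwpos i j h; omega
    have hcast : ((N i j : ℕ) : ℤ) = ((M i j : ℕ) : ℤ) := by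
      have hmul : ((M i j : ℕ) : ℤ) * w i j = ((N i j : ℕ) : ℤ) * w i j := by omega
      exact (mul_right_cancel₀ hwne hmul).symm
    have hval : (N i j : ℕ) = (M i j : ℕ) := by exact_mod_cast hcast
    exact Fin.val_injective hval
end

section
/- For all integers m, n ≥ 0, the number of binary lonesum m×n matrices equals Σ_{j=0}^{min(m,n)} (j!)² · S(m+1, j+1) · S(n+1, j+1). -/
/-- The Stirling number of the second kind `S(m, l)`. -/
def stirling : ℕ → ℕ → ℕ
  | 0, 0 => 1
  | 0, _ + 1 => 0
  | _ + 1, 0 => 0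
  | m + 1, l + 1 => (l + 1) * stirling m (l + 1) + stirling m l


open Finset

/-- Staircase property: no 2×2 permutation-pattern submatrix. -/
def Stair {m n : ℕ} (M : Fin m → Fin n → Fin 2) : Prop :=
  ∀ i i' c c', M i c = 1 → M i' c' = 1 → M i c' = 1 ∨ M i' c = 1

lemma sum_fin2 {α : Type*} [Fintype α] (v : α → Fin 2) :
    ∑ x, (v x : ℕ) = (univ.filter fun x => v x = 1).card := by
  rw [card_filter]
  refine Finset.sum_congr rfl fun x _ => ?_
  rcases (show v x = 0 ∨ v x = 1 by omega) with h | h <;> simp [h]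

lemma fin2_eq_zero {x : Fin 2} (h : ¬ x = 1) : x = 0 := by omega

/-- A staircase matrix is determined by its margins. -/
lemma stair_unique {m : ℕ} : ∀ {n : ℕ} (M N : Fin m → Fin n → Fin 2), Stair M →
    (∀ i, ∑ c, (N i c : ℕ) = ∑ c, (M i c : ℕ)) →
    (∀ c, ∑ i, (N i c : ℕ) = ∑ i, (M i c : ℕ)) → N = M := by
  intro n
  induction n with
  | zero => intro M N _ _ _; funext i c; exact c.elim0
  | succ n ih =>
    intro M N hM hrow hcol
    obtain ⟨cs, -, hcs⟩ := Finset.exists_max_image univ (fun c => ∑ i, (M i c : ℕ))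
      ⟨0, mem_univ 0⟩
    -- the column cs of M is the indicator of nonempty rows
    have hMcol : ∀ i, M i cs = 1 ↔ 0 < ∑ c, (M i c : ℕ) := by
      intro i
      constructor
      · intro h
        have h1 : (1:ℕ) ≤ ∑ c, (M i c : ℕ) := by
          have := Finset.single_le_sum (f := fun c => (M i c : ℕ))
            (fun c _ => Nat.zero_le _) (mem_univ cs)
          simpa [h] using this
        omega
      · intro hpos
        by_contra hne
        have h0 : M i cs = 0 := fin2_eq_zero hne
        obtain ⟨c, -, hc⟩ : ∃ c ∈ univ, M i c = 1 := by
          by_contra hall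
          push_neg at hall
          have : ∑ c, (M i c : ℕ) = 0 := by
            refine Finset.sum_eq_zero fun c _ => ?_
            have := fin2_eq_zero (hall c (mem_univ c))
            simp [this]
          omega
        -- every row with a 1 in column cs also has a 1 in column c
        have hsub : (univ.filter fun i' => M i' cs = 1) ⊂ (univ.filter fun i' => M i' c = 1) := by
          constructor
          · intro i' hi'
            simp only [mem_filter, mem_univ, true_and] at hi' ⊢
            rcases hM i i' c cs hc hi' with h | h
            · omega
            · exact h
          · intro hsub'
            have hi_mem : i ∈ univ.filter fun i' => M i' c = 1 := by
              simp [hc]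
            have : i ∈ univ.filter fun i' => M i' cs = 1 := hsub' hi_mem
            simp only [mem_filter] at this
            exact hne this.2
        have hlt : ∑ i', (M i' cs : ℕ) < ∑ i', (M i' c : ℕ) := by
          rw [sum_fin2 (fun i' => M i' cs), sum_fin2 (fun i' => M i' c)]
          exact Finset.card_lt_card hsub
        exact absurd (hcs c (mem_univ c)) (by omega)
    -- column cs of N equals column cs of M
    have hNcol : ∀ i, N i cs = M i cs := by
      have hA : (univ.filter fun i => N i cs = 1) ⊆ (univ.filter fun i => M i cs = 1) := by
        intro i hi
        simp only [mem_filter, mem_univ, true_and] at hi ⊢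
        have h1 : (1:ℕ) ≤ ∑ c, (N i c : ℕ) := by
          have := Finset.single_le_sum (f := fun c => (N i c : ℕ))
            (fun c _ => Nat.zero_le _) (mem_univ cs)
          simp [hi] at this; omega
        rw [hrow i] at h1
        exact (hMcol i).2 (by omega)
      have hcard : (univ.filter fun i => M i cs = 1).card ≤
          (univ.filter fun i => N i cs = 1).card := by
        rw [← sum_fin2 (fun i => M i cs), ← sum_fin2 (fun i => N i cs), hcol cs]
      have hAB := Finset.eq_of_subset_of_card_le hA hcard
      intro i
      rcases (show N i cs = 0 ∨ N i cs = 1 by omega) with h | h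
      · rcases (show M i cs = 0 ∨ M i cs = 1 by omega) with h' | h'
        · rw [h, h']
        · exfalso
          have : i ∈ univ.filter fun i => N i cs = 1 := by rw [hAB]; simp [h']
          simp only [mem_filter] at this
          omega
      · have : i ∈ univ.filter fun i => M i cs = 1 := by
          rw [← hAB]; simp [h]
        simp only [mem_filter, mem_univ, true_and] at this
        rw [h, this]
    -- remove column cs and induct
    have key : (fun i c => N i (cs.succAbove c)) = (fun i c => M i (cs.succAbove c)) := by
      refine ih _ _ ?_ ?_ ?_
      · intro i i' c c' h1 h2
        exact hM i i' _ _ h1 h2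
      · intro i
        have hN := Fin.sum_univ_succAbove (fun c => (N i c : ℕ)) cs
        have hMs := Fin.sum_univ_succAbove (fun c => (M i c : ℕ)) cs
        have := hrow i
        rw [hN, hMs, hNcol i] at this
        omega
      · intro c; exact hcol (cs.succAbove c)
    funext i c
    by_cases hc : c = cs
    · rw [hc]; exact hNcol i
    · obtain ⟨d, hd⟩ := Fin.exists_succAbove_eq hc
      rw [← hd]
      exact congrFun (congrFun key i) d

lemma coe_update {k : ℕ} (w : Fin k → Fin 2) (c : Fin k) (x : Fin 2) :
    (fun b => ((Function.update w c x) b : ℕ)) = Function.update (fun b => (w b : ℕ)) c (x : ℕ) := by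
  funext b
  by_cases hb : b = c
  · subst hb; simp
  · simp [Function.update_of_ne hb]

lemma sum_update2 {k : ℕ} (v : Fin k → Fin 2) (c c' : Fin k) (hcc : c ≠ c')
    (h1 : v c = 1) (h0 : v c' = 0) :
    ∑ b, ((Function.update (Function.update v c 0) c' 1) b : ℕ) = ∑ b, (v b : ℕ) := by
  rw [coe_update, coe_update]
  rw [Finset.sum_update_of_mem (mem_univ c'), ← Finset.erase_eq]
  rw [Finset.sum_update_of_mem (mem_erase.2 ⟨hcc, mem_univ c⟩), ← Finset.erase_eq]
  have h2 : ∑ b, (v b : ℕ) = (v c' : ℕ) + ∑ b ∈ univ.erase c', (v b : ℕ) :=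
    (Finset.add_sum_erase _ _ (mem_univ c')).symm
  have h3 : ∑ b ∈ univ.erase c', (v b : ℕ) =
      (v c : ℕ) + ∑ b ∈ (univ.erase c').erase c, (v b : ℕ) :=
    (Finset.add_sum_erase _ _ (mem_erase.2 ⟨hcc, mem_univ c⟩)).symm
  rw [h2, h3, h0, h1]
  simp

lemma lonesum_to_stair {m n : ℕ} (M : Fin m → Fin n → Fin 2) (hL : IsLonesum M) :
    Stair M := by
  intro i i' c c' h1 h2
  by_contra hcon
  push_neg at hcon
  obtain ⟨hic', hi'c⟩ := hcon
  have h3 : M i c' = 0 := by omega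
  have h4 : M i' c = 0 := by omega
  have hii : i ≠ i' := fun h => by subst h; omega
  have hcc : c ≠ c' := fun h => by subst h; omega
  set rowi : Fin n → Fin 2 := Function.update (Function.update (M i) c 0) c' 1 with hrowi
  set rowi' : Fin n → Fin 2 := Function.update (Function.update (M i') c' 0) c 1 with hrowi'
  set N : Fin m → Fin n → Fin 2 :=
    Function.update (Function.update M i rowi) i' rowi' with hN
  have hNab : ∀ a b, N a b = if a = i' then rowi' b else if a = i then rowi b else M a b := by
    intro a b
    rw [hN]
    by_cases hb : a = i'
    · subst hb; simp
    · by_cases ha : a = i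
      · subst ha; simp [Function.update_apply, hb, hii]
      · simp [Function.update_apply, ha, hb]
  have hrowiv : ∀ b, rowi b = if b = c' then 1 else if b = c then 0 else M i b := by
    intro b; rw [hrowi]; simp [Function.update_apply]
  have hrowiv' : ∀ b, rowi' b = if b = c then 1 else if b = c' then 0 else M i' b := by
    intro b; rw [hrowi']; simp [Function.update_apply]
  have hval : ∀ a b, N a b =
      if a = i' then (if b = c then 1 else if b = c' then 0 else M i' b)
      else if a = i then (if b = c' then 1 else if b = c then 0 else M i b)
      else M a b := by
    intro a b
    rw [hNab, hrowiv, hrowiv']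
  have hrowsum : ∀ a, ∑ b, (N a b : ℕ) = ∑ b, (M a b : ℕ) := by
    intro a
    by_cases hb : a = i'
    · subst hb
      have : ∀ b, N a b = (Function.update (Function.update (M a) c' 0) c 1) b := by
        intro b
        rw [hval]
        simp [Function.update_apply]
      rw [show (fun b => ((N a b : ℕ))) = fun b => ((Function.update (Function.update (M a) c' 0) c 1 b : ℕ)) from funext fun b => by rw [this b]]
      exact sum_update2 (M a) c' c (Ne.symm hcc) h2 h4
    · by_cases ha : a = i
      · subst ha
        have : ∀ b, N a b = (Function.update (Function.update (M a) c 0) c' 1) b := by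
          intro b
          rw [hval]
          simp [Function.update_apply, hb]
        rw [show (fun b => ((N a b : ℕ))) = fun b => ((Function.update (Function.update (M a) c 0) c' 1 b : ℕ)) from funext fun b => by rw [this b]]
        exact sum_update2 (M a) c c' hcc h1 h3
      · refine Finset.sum_congr rfl fun b _ => ?_
        rw [hval]
        simp [ha, hb]
  have hcolsum : ∀ b, ∑ a, (N a b : ℕ) = ∑ a, (M a b : ℕ) := by
    intro b
    by_cases hbc : b = c
    · subst hbc
      have : ∀ a, N a b = (Function.update (Function.update (fun a => M a b) i 0) i' 1) a := by
        intro a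
        rw [hval]
        by_cases ha' : a = i'
        · subst ha'; simp [Function.update_apply]
        · by_cases ha : a = i
          · subst ha; simp [Function.update_apply, ha', Ne.symm hcc, hcc, hii]
          · simp [Function.update_apply, ha, ha']
      rw [show (fun a => ((N a b : ℕ))) = fun a => ((Function.update (Function.update (fun a => M a b) i 0) i' 1 a : ℕ)) from funext fun a => by rw [this a]]
      exact sum_update2 (fun a => M a b) i i' hii h1 h4
    · by_cases hbc' : b = c'
      · subst hbc'
        have : ∀ a, N a b = (Function.update (Function.update (fun a => M a b) i' 0) i 1) a := by
          intro a
          rw [hval]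
          by_cases ha' : a = i'
          · subst ha'; simp [Function.update_apply, hcc, hbc, Ne.symm hii]
          · by_cases ha : a = i
            · subst ha; simp [Function.update_apply, ha', hcc, Ne.symm hcc]
            · simp [Function.update_apply, ha, ha']
        rw [show (fun a => ((N a b : ℕ))) = fun a => ((Function.update (Function.update (fun a => M a b) i' 0) i 1 a : ℕ)) from funext fun a => by rw [this a]]
        exact sum_update2 (fun a => M a b) i' i (Ne.symm hii) h2 h3
      · refine Finset.sum_congr rfl fun a _ => ?_
        rw [hval]
        by_cases ha' : a = i'
        · subst ha'; simp [hbc, hbc']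
        · by_cases ha : a = i
          · subst ha; simp [hbc, hbc', ha']
          · simp [ha, ha']
  have hNM := hL N hrowsum hcolsum
  have hne : N i c = M i c := by rw [hNM]
  rw [hval] at hne
  simp [hii, hcc] at hne
  omega

section PartII
variable {m n : ℕ}

def rs (M : Fin m → Fin n → Fin 2) (i : Fin m) : ℕ := ∑ c, (M i c : ℕ)

def Tr (M : Fin m → Fin n → Fin 2) : Fin n → Fin m → Fin 2 := fun c i => M i c

def RSet (M : Fin m → Fin n → Fin 2) : Finset ℕ := (univ.image (rs M)).filter (0 < ·)

def jOf (M : Fin m → Fin n → Fin 2) : ℕ := (RSet M).card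

def fOf (M : Fin m → Fin n → Fin 2) (i : Fin m) : ℕ :=
  ((RSet M).filter (· ≤ rs M i)).card

def gOf (M : Fin m → Fin n → Fin 2) (c : Fin n) : ℕ := fOf (Tr M) c

def Dfun (M : Fin m → Fin n → Fin 2) (v : ℕ) : ℕ :=
  (univ.filter fun i => v ≤ rs M i).card

lemma rs_eq_card (M : Fin m → Fin n → Fin 2) (i : Fin m) :
    rs M i = (univ.filter fun c => M i c = 1).card := sum_fin2 _

lemma rs_tr_eq_card (M : Fin m → Fin n → Fin 2) (c : Fin n) :
    rs (Tr M) c = (univ.filter fun i => M i c = 1).card := sum_fin2 _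

lemma rs_pos_of_one {M : Fin m → Fin n → Fin 2} {i : Fin m} {c : Fin n} (h : M i c = 1) :
    0 < rs M i := by
  rw [rs_eq_card]
  exact Finset.card_pos.2 ⟨c, by simp [h]⟩

lemma rs_tr_pos_of_one {M : Fin m → Fin n → Fin 2} {i : Fin m} {c : Fin n} (h : M i c = 1) :
    0 < rs (Tr M) c := rs_pos_of_one (M := Tr M) (show Tr M c i = 1 from h)

lemma stair_tr {M : Fin m → Fin n → Fin 2} (hM : Stair M) : Stair (Tr M) := by
  intro c c' i i' h1 h2
  rcases hM i i' c c' h1 h2 with h | h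
  · exact Or.inr h
  · exact Or.inl h

lemma row_mono {M : Fin m → Fin n → Fin 2} (hM : Stair M) {i i' : Fin m}
    (h : rs M i ≤ rs M i') : ∀ c, M i c = 1 → M i' c = 1 := by
  have hcomp : (∀ c, M i c = 1 → M i' c = 1) ∨ (∀ c, M i' c = 1 → M i c = 1) := by
    by_contra hcon
    push_neg at hcon
    obtain ⟨⟨c, h1, h2⟩, ⟨c', h3, h4⟩⟩ := hcon
    rcases hM i i' c c' h1 h3 with h5 | h5
    · exact h4 h5
    · exact h2 h5
  rcases hcomp with h' | h'
  · exact h'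
  · -- the two filters are equal since rs i ≤ rs i'
    have hsub : (univ.filter fun c => M i' c = 1) ⊆ (univ.filter fun c => M i c = 1) := by
      intro c hc
      simp only [mem_filter, mem_univ, true_and] at hc ⊢
      exact h' c hc
    have hcard : (univ.filter fun c => M i c = 1).card ≤
        (univ.filter fun c => M i' c = 1).card := by
      rw [← rs_eq_card, ← rs_eq_card]; exact h
    have := Finset.eq_of_subset_of_card_le hsub hcard
    intro c hc
    have : c ∈ univ.filter fun c => M i' c = 1 := by
      rw [this]; simp [hc]
    simpa using this

lemma row_strict {M : Fin m → Fin n → Fin 2} (hM : Stair M) {i i' : Fin m}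
    (h : rs M i < rs M i') : ∃ c, M i' c = 1 ∧ M i c = 0 := by
  by_contra hcon
  push_neg at hcon
  have hsub : (univ.filter fun c => M i' c = 1) ⊆ (univ.filter fun c => M i c = 1) := by
    intro c hc
    simp only [mem_filter, mem_univ, true_and] at hc ⊢
    have := hcon c hc
    omega
  have := Finset.card_le_card hsub
  rw [← rs_eq_card, ← rs_eq_card] at this
  omega

lemma col_iff {M : Fin m → Fin n → Fin 2} (hM : Stair M) (c : Fin n)
    (hc : 0 < rs (Tr M) c) : ∃ v ∈ RSet M, ∀ i, M i c = 1 ↔ v ≤ rs M i := by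
  have hne : (univ.filter fun i => M i c = 1).Nonempty := by
    rw [← Finset.card_pos, ← rs_tr_eq_card]; exact hc
  obtain ⟨i₀, hi₀, hmin⟩ := Finset.exists_min_image _ (fun i => rs M i) hne
  simp only [mem_filter, mem_univ, true_and] at hi₀
  refine ⟨rs M i₀, ?_, fun i => ⟨fun h => ?_, fun h => ?_⟩⟩
  · simp only [RSet, mem_filter, mem_image]
    exact ⟨⟨i₀, mem_univ i₀, rfl⟩, rs_pos_of_one hi₀⟩
  · exact hmin i (by simp [h])
  · exact row_mono hM h c hi₀

lemma col_exists {M : Fin m → Fin n → Fin 2} (hM : Stair M) (v : ℕ)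
    (hv : v ∈ RSet M) : ∃ c, ∀ i, M i c = 1 ↔ v ≤ rs M i := by
  simp only [RSet, mem_filter, mem_image] at hv
  obtain ⟨⟨i₂, -, hi₂⟩, hvpos⟩ := hv
  set W := (RSet M).filter (· < v) with hW
  by_cases hWne : W.Nonempty
  · obtain ⟨u, hu, hmax⟩ := Finset.exists_max_image W id hWne
    have hu' := hu
    simp only [hW, RSet, mem_filter, mem_image] at hu'
    obtain ⟨⟨⟨i₁, -, hi₁⟩, hupos⟩, huv⟩ := hu'
    obtain ⟨c, hc1, hc0⟩ := row_strict hM (show rs M i₁ < rs M i₂ by omega)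
    refine ⟨c, fun i => ⟨fun h => ?_, fun h => ?_⟩⟩
    · by_contra hlt
      push_neg at hlt
      have hmem : rs M i ∈ W := by
        simp only [hW, RSet, mem_filter, mem_image]
        exact ⟨⟨⟨i, mem_univ i, rfl⟩, rs_pos_of_one h⟩, hlt⟩
      have hle : rs M i ≤ u := hmax _ hmem
      have := row_mono hM (show rs M i ≤ rs M i₁ by omega) c h
      omega
    · exact row_mono hM (show rs M i₂ ≤ rs M i by omega) c hc1
  · have hone : ∃ c, M i₂ c = 1 := by
      by_contra hall
      push_neg at hall
      have : rs M i₂ = 0 := by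
        rw [rs_eq_card]
        refine Finset.card_eq_zero.2 (Finset.filter_eq_empty_iff.2 fun c _ => hall c)
      omega
    obtain ⟨c, hc1⟩ := hone
    refine ⟨c, fun i => ⟨fun h => ?_, fun h => ?_⟩⟩
    · by_contra hlt
      push_neg at hlt
      refine hWne ⟨rs M i, ?_⟩
      simp only [hW, RSet, mem_filter, mem_image]
      exact ⟨⟨⟨i, mem_univ i, rfl⟩, rs_pos_of_one h⟩, hlt⟩
    · exact row_mono hM (show rs M i₂ ≤ rs M i by omega) c hc1
  
lemma cs_eq_Dfun {M : Fin m → Fin n → Fin 2} {c : Fin n} {v : ℕ}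
    (hiff : ∀ i, M i c = 1 ↔ v ≤ rs M i) : rs (Tr M) c = Dfun M v := by
  rw [rs_tr_eq_card, Dfun]
  congr 1
  ext i
  simp [hiff i]

lemma Dfun_anti {M : Fin m → Fin n → Fin 2} {v v' : ℕ} (h : v < v')
    (hv : v ∈ RSet M) : Dfun M v' < Dfun M v := by
  simp only [RSet, mem_filter, mem_image] at hv
  obtain ⟨⟨i, -, hi⟩, -⟩ := hv
  refine Finset.card_lt_card ⟨fun i' hi' => ?_, fun hsub => ?_⟩
  · simp only [mem_filter, mem_univ, true_and] at hi' ⊢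
    omega
  · have : i ∈ univ.filter fun i' => v ≤ rs M i' := by simp [hi]
    have := hsub this
    simp only [mem_filter, mem_univ, true_and] at this
    omega

lemma Dfun_le_iff {M : Fin m → Fin n → Fin 2} {v v' : ℕ}
    (hv : v ∈ RSet M) (hv' : v' ∈ RSet M) : Dfun M v' ≤ Dfun M v ↔ v ≤ v' := by
  constructor
  · intro h
    by_contra hlt
    push_neg at hlt
    have := Dfun_anti hlt hv'
    omega
  · intro h
    rcases Nat.eq_or_lt_of_le h with h' | h'
    · rw [h']
    · exact le_of_lt (Dfun_anti h' hv)

lemma Dfun_injOn (M : Fin m → Fin n → Fin 2) :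
    Set.InjOn (Dfun M) (RSet M : Set ℕ) := by
  intro v hv v' hv' h
  simp only [Finset.mem_coe] at hv hv'
  have h1 := (Dfun_le_iff hv hv').1 (le_of_eq h.symm)
  have h2 := (Dfun_le_iff hv' hv).1 (le_of_eq h)
  omega

lemma RSet_tr {M : Fin m → Fin n → Fin 2} (hM : Stair M) :
    RSet (Tr M) = (RSet M).image (Dfun M) := by
  ext u
  simp only [RSet, mem_filter, mem_image]
  constructor
  · rintro ⟨⟨c, -, hc⟩, hupos⟩
    obtain ⟨v, hv, hiff⟩ := col_iff hM c (by omega)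
    refine ⟨v, ?_, by rw [← cs_eq_Dfun hiff, hc]⟩
    simpa [RSet, mem_filter, mem_image] using hv
  · rintro ⟨v, hv, hu⟩
    have hv' : v ∈ RSet M := by simpa [RSet, mem_filter, mem_image] using hv
    obtain ⟨c, hiff⟩ := col_exists hM v hv'
    have hcs := cs_eq_Dfun hiff
    have hvpos : 0 < Dfun M v := by
      simp only [RSet, mem_filter, mem_image] at hv'
      obtain ⟨⟨i, -, hi⟩, -⟩ := hv'
      exact Finset.card_pos.2 ⟨i, by simp [hi]⟩
    exact ⟨⟨c, mem_univ c, by rw [hcs, hu]⟩, by omega⟩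

lemma jOf_tr {M : Fin m → Fin n → Fin 2} (hM : Stair M) : jOf (Tr M) = jOf M := by
  rw [jOf, jOf, RSet_tr hM, Finset.card_image_of_injOn (Dfun_injOn M)]

lemma gOf_formula {M : Fin m → Fin n → Fin 2} (hM : Stair M) {c : Fin n} {v : ℕ}
    (hv : v ∈ RSet M) (hiff : ∀ i, M i c = 1 ↔ v ≤ rs M i) :
    gOf M c = ((RSet M).filter (fun w => v ≤ w)).card := by
  rw [gOf, fOf, cs_eq_Dfun hiff, RSet_tr hM]
  have : ((RSet M).image (Dfun M)).filter (· ≤ Dfun M v) =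
      ((RSet M).filter (fun w => v ≤ w)).image (Dfun M) := by
    ext u
    simp only [mem_filter, mem_image]
    constructor
    · rintro ⟨⟨w, hw, hwu⟩, hu⟩
      refine ⟨w, ⟨hw, ?_⟩, hwu⟩
      rw [← hwu] at hu
      exact (Dfun_le_iff hv hw).1 hu
    · rintro ⟨w, ⟨hw, hvw⟩, hwu⟩
      exact ⟨⟨w, hw, hwu⟩, by rw [← hwu]; exact (Dfun_le_iff hv hw).2 hvw⟩
  rw [this, Finset.card_image_of_injOn ((Dfun_injOn M).mono (by
    intro w hw
    simp only [Finset.coe_filter, Set.mem_setOf_eq, Finset.mem_coe] at hw ⊢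
    exact hw.1))]

lemma fOf_le (M : Fin m → Fin n → Fin 2) (i : Fin m) : fOf M i ≤ jOf M :=
  Finset.card_le_card (Finset.filter_subset _ _)

/-- Main structure theorem: a staircase matrix is the threshold matrix of its ranks. -/
lemma stair_iff_rank {M : Fin m → Fin n → Fin 2} (hM : Stair M) (i : Fin m) (c : Fin n) :
    M i c = 1 ↔ jOf M < fOf M i + gOf M c := by
  by_cases hc : 0 < rs (Tr M) c
  · obtain ⟨v, hv, hiff⟩ := col_iff hM c hc
    have hg := gOf_formula hM hv hiff
    have hsplit : ((RSet M).filter (fun w => w < v)).card +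
        ((RSet M).filter (fun w => v ≤ w)).card = jOf M := by
      have hfe : (RSet M).filter (fun w => v ≤ w) = (RSet M).filter (fun w => ¬ w < v) := by
        ext w
        simp only [mem_filter, and_congr_right_iff]
        intro _
        omega
      rw [hfe, jOf, Finset.card_filter_add_card_filter_not]
    have hfiff : v ≤ rs M i ↔ ((RSet M).filter (fun w => w < v)).card < fOf M i := by
      constructor
      · intro h
        have hsub : insert v ((RSet M).filter (fun w => w < v)) ⊆
            (RSet M).filter (· ≤ rs M i) := by
          intro w hw
          rcases Finset.mem_insert.1 hw with h' | h'
          · subst h'; exact Finset.mem_filter.2 ⟨hv, h⟩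
          · simp only [mem_filter] at h' ⊢
            exact ⟨h'.1, by omega⟩
        have := Finset.card_le_card hsub
        rw [Finset.card_insert_of_notMem (by simp)] at this
        rw [fOf]
        omega
      · intro h
        by_contra hlt
        push_neg at hlt
        have hsub : (RSet M).filter (· ≤ rs M i) ⊆ (RSet M).filter (fun w => w < v) := by
          intro w hw
          simp only [mem_filter] at hw ⊢
          exact ⟨hw.1, by omega⟩
        have := Finset.card_le_card hsub
        rw [fOf] at h
        omega
    rw [hiff i, hfiff, hg]
    omega
  · have hcz : rs (Tr M) c = 0 := by omega
    have hMic : M i c ≠ 1 := fun h => by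
      have := rs_tr_pos_of_one h
      omega
    have hgz : gOf M c = 0 := by
      rw [gOf, fOf]
      refine Finset.card_eq_zero.2 (Finset.filter_eq_empty_iff.2 fun w hw => ?_)
      simp only [RSet, mem_filter, mem_image] at hw
      rw [hcz]
      omega
    have := fOf_le M i
    constructor
    · intro h; exact absurd h hMic
    · intro h; omega

/-- Over a `Finset ℕ`, ranks `1..card` are all attained. -/
lemma rank_surj (S : Finset ℕ) (k : ℕ) (h1 : 1 ≤ k) (h2 : k ≤ S.card) :
    ∃ v ∈ S, (S.filter (· ≤ v)).card = k := by
  have hk : k - 1 < S.card := by omega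
  set e := S.orderIsoOfFin rfl with he
  set v : ℕ := (e ⟨k - 1, hk⟩ : ℕ) with hv
  refine ⟨v, (e ⟨k - 1, hk⟩).2, ?_⟩
  have himg : S.filter (· ≤ v) =
      (univ.filter (fun l : Fin S.card => l ≤ ⟨k - 1, hk⟩)).image (fun l => (e l : ℕ)) := by
    ext w
    simp only [mem_filter, mem_image, mem_univ, true_and]
    constructor
    · rintro ⟨hwS, hwv⟩
      refine ⟨e.symm ⟨w, hwS⟩, ?_, by simp⟩
      rw [← e.le_iff_le]
      exact Subtype.coe_le_coe.1 (by simpa [hv] using hwv)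
    · rintro ⟨l, hl, hlw⟩
      refine ⟨by rw [← hlw]; exact (e l).2, ?_⟩
      rw [← hlw, hv]
      exact e.le_iff_le.2 hl
  rw [himg, Finset.card_image_of_injective _ (fun a b hab => e.injective (Subtype.ext hab))]
  have : (univ.filter (fun l : Fin S.card => l ≤ ⟨k - 1, hk⟩)) = Finset.Iic (⟨k - 1, hk⟩ : Fin S.card) := by
    ext l; simp
  rw [this, Fin.card_Iic]
  have hval : ((⟨k - 1, hk⟩ : Fin S.card) : ℕ) = k - 1 := rfl
  rw [hval]
  omega

lemma fOf_surj (M : Fin m → Fin n → Fin 2) (k : ℕ) (h1 : 1 ≤ k) (h2 : k ≤ jOf M) :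
    ∃ i, fOf M i = k := by
  obtain ⟨v, hv, hcard⟩ := rank_surj (RSet M) k h1 h2
  have hv' := hv
  simp only [RSet, mem_filter, mem_image] at hv'
  obtain ⟨⟨i, -, hi⟩, -⟩ := hv'
  exact ⟨i, by rw [fOf, hi]; exact hcard⟩

lemma rs_le (M : Fin m → Fin n → Fin 2) (i : Fin m) : rs M i ≤ n := by
  rw [rs_eq_card]
  calc (univ.filter fun c => M i c = 1).card ≤ (univ : Finset (Fin n)).card :=
        Finset.card_le_card (filter_subset _ _)
    _ = n := by simp

lemma jOf_le_m (M : Fin m → Fin n → Fin 2) : jOf M ≤ m := by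
  calc jOf M ≤ (univ.image (rs M)).card := Finset.card_le_card (filter_subset _ _)
    _ ≤ (univ : Finset (Fin m)).card := Finset.card_image_le
    _ = m := by simp

lemma jOf_le_n (M : Fin m → Fin n → Fin 2) : jOf M ≤ n := by
  have hsub : RSet M ⊆ Finset.Icc 1 n := by
    intro v hv
    simp only [RSet, mem_filter, mem_image] at hv
    obtain ⟨⟨i, -, hi⟩, hpos⟩ := hv
    rw [Finset.mem_Icc]
    exact ⟨by omega, by rw [← hi]; exact rs_le M i⟩
  calc jOf M ≤ (Finset.Icc 1 n).card := Finset.card_le_card hsub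
    _ = n := by rw [Nat.card_Icc]; omega

def Dec (j : ℕ) (f : Fin m → ℕ) (g : Fin n → ℕ) : Fin m → Fin n → Fin 2 :=
  fun i c => if j < f i + g c then 1 else 0

lemma dec_one_iff {j : ℕ} {f : Fin m → ℕ} {g : Fin n → ℕ} {i : Fin m} {c : Fin n} :
    Dec j f g i c = 1 ↔ j < f i + g c := by
  rw [Dec]
  split_ifs with h
  · simp [h]
  · simp [h]

lemma stair_dec (j : ℕ) (f : Fin m → ℕ) (g : Fin n → ℕ) : Stair (Dec j f g) := by
  intro i i' c c' h1 h2
  rw [dec_one_iff] at h1 h2 ⊢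
  rw [dec_one_iff]
  rcases le_total (f i) (f i') with h | h
  · right; omega
  · left; omega

section Decode
variable (j : ℕ) (f : Fin m → ℕ) (g : Fin n → ℕ)

def Hfun (k : ℕ) : ℕ := (univ.filter fun c => j < k + g c).card

variable {j f g}
variable (hfb : ∀ i, f i ≤ j) (hfc : ∀ k, 1 ≤ k → k ≤ j → ∃ i, f i = k)
variable (hgb : ∀ c, g c ≤ j) (hgc : ∀ k, 1 ≤ k → k ≤ j → ∃ c, g c = k)

lemma rs_dec (i : Fin m) : rs (Dec j f g) i = Hfun j g (f i) := by
  rw [rs_eq_card, Hfun]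
  congr 1
  ext c
  simp [dec_one_iff]

include hgc in
lemma Hfun_strict {k k' : ℕ} (h : k < k') (h' : k' ≤ j) : Hfun j g k < Hfun j g k' := by
  obtain ⟨c, hc⟩ := hgc (j - k) (by omega) (by omega)
  refine Finset.card_lt_card ⟨fun c' hc' => ?_, fun hsub => ?_⟩
  · simp only [mem_filter, mem_univ, true_and] at hc' ⊢
    omega
  · have h1 : c ∈ univ.filter fun c => j < k' + g c := by
      simp only [mem_filter, mem_univ, true_and]
      omega
    have := hsub h1
    simp only [mem_filter, mem_univ, true_and] at this
    omega

include hgb in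
lemma Hfun_zero : Hfun j g 0 = 0 := by
  rw [Hfun]
  refine Finset.card_eq_zero.2 (Finset.filter_eq_empty_iff.2 fun c _ => ?_)
  have := hgb c
  omega

include hgb hgc in
lemma Hfun_le_iff {k k' : ℕ} (hk : k ≤ j) (hk' : k' ≤ j) :
    Hfun j g k ≤ Hfun j g k' ↔ k ≤ k' := by
  constructor
  · intro h
    by_contra hlt
    push_neg at hlt
    have := Hfun_strict hgc hlt hk
    omega
  · intro h
    rcases Nat.eq_or_lt_of_le h with h' | h'
    · rw [h']
    · exact le_of_lt (Hfun_strict hgc h' hk')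

include hfb hfc hgb hgc in
lemma RSet_dec : RSet (Dec j f g) = (Finset.Icc 1 j).image (Hfun j g) := by
  ext u
  simp only [RSet, mem_filter, mem_image, Finset.mem_Icc]
  constructor
  · rintro ⟨⟨i, -, hi⟩, hupos⟩
    refine ⟨f i, ⟨?_, hfb i⟩, by rw [← rs_dec]; exact hi⟩
    by_contra h0
    push_neg at h0
    have hf0 : f i = 0 := by omega
    rw [rs_dec, hf0, Hfun_zero hgb] at hi
    omega
  · rintro ⟨k, ⟨hk1, hk2⟩, hku⟩
    obtain ⟨i, hi⟩ := hfc k hk1 hk2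
    have hpos : 0 < Hfun j g k := by
      have := Hfun_strict hgc (show 0 < k by omega) hk2
      rw [Hfun_zero hgb] at this
      exact this
    exact ⟨⟨i, mem_univ i, by rw [rs_dec, hi, hku]⟩, by omega⟩

include hfb hfc hgb hgc in
lemma jOf_dec : jOf (Dec j f g) = j := by
  rw [jOf, RSet_dec hfb hfc hgb hgc,
    Finset.card_image_of_injOn (fun k hk k' hk' h => ?_), Nat.card_Icc]
  · omega
  · simp only [Finset.coe_Icc, Set.mem_Icc] at hk hk'
    have h1 := (Hfun_le_iff hgb hgc hk.2 hk'.2).1 (le_of_eq h)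
    have h2 := (Hfun_le_iff hgb hgc hk'.2 hk.2).1 (le_of_eq h.symm)
    omega

include hfb hfc hgb hgc in
lemma fOf_dec (i : Fin m) : fOf (Dec j f g) i = f i := by
  rw [fOf, RSet_dec hfb hfc hgb hgc, rs_dec]
  have himg : ((Finset.Icc 1 j).image (Hfun j g)).filter (· ≤ Hfun j g (f i)) =
      ((Finset.Icc 1 j).filter (· ≤ f i)).image (Hfun j g) := by
    ext u
    simp only [mem_filter, mem_image, Finset.mem_Icc]
    constructor
    · rintro ⟨⟨k, ⟨hk1, hk2⟩, hku⟩, hu⟩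
      refine ⟨k, ⟨⟨hk1, hk2⟩, ?_⟩, hku⟩
      rw [← hku] at hu
      exact (Hfun_le_iff hgb hgc hk2 (hfb i)).1 hu
    · rintro ⟨k, ⟨⟨hk1, hk2⟩, hkf⟩, hku⟩
      exact ⟨⟨k, ⟨hk1, hk2⟩, hku⟩, by
        rw [← hku]
        exact (Hfun_le_iff hgb hgc hk2 (hfb i)).2 hkf⟩
  rw [himg, Finset.card_image_of_injOn (fun k hk k' hk' h => ?_)]
  · have : (Finset.Icc 1 j).filter (· ≤ f i) = Finset.Icc 1 (f i) := by
      ext k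
      simp only [mem_filter, Finset.mem_Icc]
      constructor
      · rintro ⟨⟨h1, h2⟩, h3⟩; exact ⟨h1, h3⟩
      · rintro ⟨h1, h3⟩; exact ⟨⟨h1, le_trans h3 (hfb i)⟩, h3⟩
    rw [this, Nat.card_Icc]
    omega
  · simp only [Finset.coe_filter, Set.mem_setOf_eq, Finset.mem_Icc] at hk hk'
    have h1 := (Hfun_le_iff hgb hgc hk.1.2 hk'.1.2).1 (le_of_eq h)
    have h2 := (Hfun_le_iff hgb hgc hk'.1.2 hk.1.2).1 (le_of_eq h.symm)
    omega

end Decode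

lemma tr_dec (j : ℕ) (f : Fin m → ℕ) (g : Fin n → ℕ) :
    Tr (Dec j f g) = Dec j g f := by
  funext c i
  rw [Tr, Dec, Dec]
  exact if_congr (by omega) rfl rfl

lemma gOf_dec {j : ℕ} {f : Fin m → ℕ} {g : Fin n → ℕ}
    (hfb : ∀ i, f i ≤ j) (hfc : ∀ k, 1 ≤ k → k ≤ j → ∃ i, f i = k)
    (hgb : ∀ c, g c ≤ j) (hgc : ∀ k, 1 ≤ k → k ≤ j → ∃ c, g c = k) (c : Fin n) :
    gOf (Dec j f g) c = g c := by
  rw [gOf, tr_dec]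
  exact fOf_dec hgb hgc hfb hfc c

end PartII

def Cov {m j : ℕ} (f : Fin m → Fin (j + 1)) : Prop :=
  ∀ k : Fin (j + 1), k ≠ 0 → ∃ i, f i = k

instance covDec {m j : ℕ} (f : Fin m → Fin (j + 1)) : Decidable (Cov f) := by
  unfold Cov; infer_instance

instance stairDec {m n : ℕ} (M : Fin m → Fin n → Fin 2) : Decidable (Stair M) := by
  unfold Stair; infer_instance

lemma cov_iff {m j : ℕ} (f : Fin m → Fin (j + 1)) :
    Cov f ↔ ∀ k : ℕ, 1 ≤ k → k ≤ j → ∃ i, (f i : ℕ) = k := by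
  constructor
  · intro h k hk1 hk2
    obtain ⟨i, hi⟩ := h ⟨k, by omega⟩ (by
      intro h0
      rw [Fin.ext_iff] at h0
      simp at h0
      omega)
    exact ⟨i, by rw [hi]⟩
  · intro h k hk
    have hk1 : 1 ≤ (k : ℕ) := by
      by_contra h0
      exact hk (Fin.ext (by simp only [Fin.val_zero]; omega))
    obtain ⟨i, hi⟩ := h (k : ℕ) hk1 (by omega)
    exact ⟨i, Fin.ext hi⟩

theorem count_stair (m n : ℕ) :
    (univ.filter (fun M : Fin m → Fin n → Fin 2 => Stair M)).card
      = ∑ j ∈ Finset.range (min m n + 1),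
          (univ.filter (fun f : Fin m → Fin (j + 1) => Cov f)).card *
          (univ.filter (fun g : Fin n → Fin (j + 1) => Cov g)).card := by
  rw [Finset.card_eq_sum_card_fiberwise (f := jOf) (t := Finset.range (min m n + 1))
    (fun M _ => by
      rw [Finset.mem_coe, Finset.mem_range]
      have h1 := jOf_le_m M
      have h2 := jOf_le_n M
      omega)]
  refine Finset.sum_congr rfl fun j hj => ?_
  rw [← Finset.card_product]
  refine Finset.card_bij'
    (fun M hM => (fun i => (⟨fOf M i, ?_⟩ : Fin (j + 1)), fun c => (⟨gOf M c, ?_⟩ : Fin (j + 1))))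
    (fun fg hfg => Dec j (fun i => ((fg.1 i : ℕ))) (fun c => ((fg.2 c : ℕ)))) ?_ ?_ ?_ ?_
  -- bound for fOf
  · simp only [mem_filter, mem_univ, true_and] at hM
    have := fOf_le M i
    omega
  -- bound for gOf
  · simp only [mem_filter, mem_univ, true_and] at hM
    have h1 : gOf M c ≤ jOf (Tr M) := fOf_le (Tr M) c
    rw [jOf_tr hM.1] at h1
    omega
  -- enc maps into t
  · intro M hM
    simp only [mem_filter, mem_univ, true_and] at hM ⊢
    obtain ⟨hstair, hjof⟩ := hM
    rw [Finset.mem_product]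
    constructor
    · simp only [mem_filter, mem_univ, true_and]
      rw [cov_iff]
      intro k hk1 hk2
      obtain ⟨i, hi⟩ := fOf_surj M k hk1 (by omega)
      exact ⟨i, hi⟩
    · simp only [mem_filter, mem_univ, true_and]
      rw [cov_iff]
      intro k hk1 hk2
      obtain ⟨c, hc⟩ := fOf_surj (Tr M) k hk1 (by rw [jOf_tr hstair]; omega)
      exact ⟨c, hc⟩
  -- dec maps into s
  · intro fg hfg
    rw [Finset.mem_product] at hfg
    simp only [mem_filter, mem_univ, true_and] at hfg ⊢
    obtain ⟨hf, hg⟩ := hfg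
    have hfb : ∀ i, (fg.1 i : ℕ) ≤ j := fun i => by omega
    have hgb : ∀ c, (fg.2 c : ℕ) ≤ j := fun c => by omega
    have hfc := (cov_iff fg.1).1 hf
    have hgc := (cov_iff fg.2).1 hg
    exact ⟨stair_dec j _ _, jOf_dec hfb hfc hgb hgc⟩
  -- dec ∘ enc = id
  · intro M hM
    simp only [mem_filter, mem_univ, true_and] at hM
    obtain ⟨hstair, hjof⟩ := hM
    funext i c
    have hr := stair_iff_rank hstair i c
    rw [hjof] at hr
    show Dec j (fun i => fOf M i) (fun c => gOf M c) i c = M i c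
    rcases (show M i c = 0 ∨ M i c = 1 by omega) with h | h
    · rw [h, Dec, if_neg]
      intro hcon
      rw [← hr] at hcon
      omega
    · rw [h, Dec, if_pos (hr.1 h)]
  -- enc ∘ dec = id
  · intro fg hfg
    rw [Finset.mem_product] at hfg
    simp only [mem_filter, mem_univ, true_and] at hfg
    obtain ⟨hf, hg⟩ := hfg
    have hfb : ∀ i, (fg.1 i : ℕ) ≤ j := fun i => by omega
    have hgb : ∀ c, (fg.2 c : ℕ) ≤ j := fun c => by omega
    have hfc := (cov_iff fg.1).1 hf
    have hgc := (cov_iff fg.2).1 hg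
    refine Prod.ext ?_ ?_
    · funext i
      exact Fin.ext (by
        show fOf (Dec j _ _) i = (fg.1 i : ℕ)
        exact fOf_dec hfb hfc hgb hgc i)
    · funext c
      exact Fin.ext (by
        show gOf (Dec j _ _) c = (fg.2 c : ℕ)
        exact gOf_dec hfb hfc hgb hgc c)

lemma succAbove_zero' {j : ℕ} (k : Fin (j + 2)) (h : k ≠ 0) : k.succAbove 0 = 0 := by
  rw [Fin.succAbove_of_castSucc_lt] <;> simp [Fin.pos_iff_ne_zero, h]

lemma covcard_step1 (m j : ℕ) :
    ((univ : Finset (Fin (m + 1) → Fin (j + 2))).filter Cov).card =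
      (j + 2) * ((univ : Finset (Fin m → Fin (j + 2))).filter Cov).card
      + (j + 1) * ((univ : Finset (Fin m → Fin (j + 1))).filter Cov).card := by
  set S := (univ : Finset (Fin (m + 1) → Fin (j + 2))).filter Cov with hS
  rw [← Finset.card_filter_add_card_filter_not
    (s := S) (p := fun f => Cov (fun i : Fin m => f i.castSucc))]
  congr 1
  -- Count 1: restriction still covers
  · rw [show (j + 2) * ((univ : Finset (Fin m → Fin (j + 2))).filter Cov).card =
      (((univ : Finset (Fin m → Fin (j + 2))).filter Cov) ×ˢ
        (univ : Finset (Fin (j + 2)))).card from by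
      rw [Finset.card_product]; simp [mul_comm]]
    refine Finset.card_bij'
      (fun f _ => ((fun i => f i.castSucc), f (Fin.last m)))
      (fun fx _ => Fin.snoc fx.1 fx.2) ?_ ?_ ?_ ?_
    · intro f hf
      simp only [hS, mem_filter, mem_univ, true_and] at hf ⊢
      rw [Finset.mem_product]
      exact ⟨by simp only [mem_filter, mem_univ, true_and]; exact hf.2, mem_univ _⟩
    · intro fx hfx
      rw [Finset.mem_product] at hfx
      simp only [mem_filter, mem_univ, true_and] at hfx
      simp only [hS, mem_filter, mem_univ, true_and]
      have hres : (fun i : Fin m => (Fin.snoc fx.1 fx.2 : Fin (m+1) → Fin (j+2)) i.castSucc)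
          = fx.1 := funext fun i => Fin.snoc_castSucc _ _ i
      constructor
      · intro k hk
        obtain ⟨i, hi⟩ := hfx.1 k hk
        exact ⟨i.castSucc, by rw [Fin.snoc_castSucc]; exact hi⟩
      · rw [hres]; exact hfx.1
    · intro f hf
      exact Fin.snoc_init_self f
    · intro fx hfx
      refine Prod.ext ?_ ?_
      · funext i
        simp only [Fin.snoc_castSucc]
      · simp only [Fin.snoc_last]
  -- Count 2: restriction misses exactly the last value
  · rw [show (j + 1) * ((univ : Finset (Fin m → Fin (j + 1))).filter Cov).card =
      (((univ : Finset (Fin (j + 2))).filter (fun k => k ≠ 0)) ×ˢ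
        ((univ : Finset (Fin m → Fin (j + 1))).filter Cov)).card from by
      rw [Finset.card_product, Finset.filter_ne', Finset.card_erase_of_mem (mem_univ _)]
      simp]
    refine Finset.card_bij'
      (fun f _ => (f (Fin.last m),
        fun i => ((finSuccEquiv' (f (Fin.last m))) (f i.castSucc)).getD 0))
      (fun kf _ => Fin.snoc (fun i => kf.1.succAbove (kf.2 i)) kf.1) ?_ ?_ ?_ ?_
    · intro f hf
      simp only [hS, mem_filter, mem_univ, true_and] at hf
      obtain ⟨hcov, hnc⟩ := hf
      -- the restriction misses some k₀ ≠ 0, and then f (last) = k₀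
      have hmiss : ∃ k₀ : Fin (j + 2), k₀ ≠ 0 ∧ ∀ i : Fin m, f i.castSucc ≠ k₀ := by
        by_contra hcon
        push_neg at hcon
        exact hnc fun k hk => hcon k hk
      obtain ⟨k₀, hk₀, hk₀m⟩ := hmiss
      have hlast : f (Fin.last m) = k₀ := by
        obtain ⟨a, ha⟩ := hcov k₀ hk₀
        rcases Fin.eq_castSucc_or_eq_last a with ⟨i, rfl⟩ | rfl
        · exact absurd ha (hk₀m i)
        · exact ha
      rw [Finset.mem_product]
      constructor
      · simp only [mem_filter, mem_univ, true_and]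
        rw [hlast]; exact hk₀
      · simp only [mem_filter, mem_univ, true_and]
        intro k' hk'
        have hxne : k₀.succAbove k' ≠ k₀ := Fin.succAbove_ne k₀ k'
        have hz : k₀.succAbove 0 = 0 := succAbove_zero' k₀ hk₀
        have hxnz : k₀.succAbove k' ≠ 0 := fun h0 =>
          hk' (Fin.succAbove_right_injective (p := k₀) (by rw [h0, hz]))
        obtain ⟨a, ha⟩ := hcov (k₀.succAbove k') hxnz
        rcases Fin.eq_castSucc_or_eq_last a with ⟨i, rfl⟩ | rfl
        · refine ⟨i, ?_⟩
          show ((finSuccEquiv' (f (Fin.last m))) (f i.castSucc)).getD 0 = k'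
          rw [hlast, ha, finSuccEquiv'_succAbove]
          rfl
        · rw [hlast] at ha
          exact absurd ha.symm hxne
    · intro kf hkf
      rw [Finset.mem_product] at hkf
      simp only [mem_filter, mem_univ, true_and] at hkf
      obtain ⟨hk, hcov⟩ := hkf
      simp only [hS, mem_filter, mem_univ, true_and]
      refine ⟨?_, ?_⟩
      · intro k'' hk''
        by_cases hkk : k'' = kf.1
        · exact ⟨Fin.last m, by rw [Fin.snoc_last, hkk]⟩
        · obtain ⟨y, hy⟩ := Fin.exists_succAbove_eq hkk
          have hynz : y ≠ 0 := by
            intro h0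
            rw [h0, succAbove_zero' kf.1 hk] at hy
            exact hk'' hy.symm
          obtain ⟨i, hi⟩ := hcov y hynz
          exact ⟨i.castSucc, by rw [Fin.snoc_castSucc, hi, hy]⟩
      · intro hP
        obtain ⟨i, hi⟩ := hP kf.1 hk
        simp only [Fin.snoc_castSucc] at hi
        exact Fin.succAbove_ne kf.1 (kf.2 i) hi
    · intro f hf
      simp only [hS, mem_filter, mem_univ, true_and] at hf
      obtain ⟨hcov, hnc⟩ := hf
      have hmiss : ∃ k₀ : Fin (j + 2), k₀ ≠ 0 ∧ ∀ i : Fin m, f i.castSucc ≠ k₀ := by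
        by_contra hcon
        push_neg at hcon
        exact hnc fun k hk => hcon k hk
      obtain ⟨k₀, hk₀, hk₀m⟩ := hmiss
      have hlast : f (Fin.last m) = k₀ := by
        obtain ⟨a, ha⟩ := hcov k₀ hk₀
        rcases Fin.eq_castSucc_or_eq_last a with ⟨i, rfl⟩ | rfl
        · exact absurd ha (hk₀m i)
        · exact ha
      funext a
      rcases Fin.eq_castSucc_or_eq_last a with ⟨i, rfl⟩ | rfl
      · simp only [Fin.snoc_castSucc]
        have hne : f i.castSucc ≠ f (Fin.last m) := by rw [hlast]; exact hk₀m i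
        obtain ⟨y, hy⟩ := Fin.exists_succAbove_eq hne
        rw [← hy, finSuccEquiv'_succAbove]
        rfl
      · simp only [Fin.snoc_last]
    · intro kf hkf
      refine Prod.ext ?_ ?_
      · simp only [Fin.snoc_last]
      · funext i
        simp only [Fin.snoc_last, Fin.snoc_castSucc, finSuccEquiv'_succAbove,
          Option.getD_some]

lemma covcard_all (m : ℕ) :
    ((univ : Finset (Fin m → Fin 1)).filter Cov).card = 1 := by
  have hall : ∀ f ∈ (univ : Finset (Fin m → Fin 1)), Cov f := by
    intro f _ k hk
    exact absurd (by omega : k = 0) hk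
  rw [Finset.filter_true_of_mem hall]
  simp

lemma stirling_one (m : ℕ) : stirling (m + 1) 1 = 1 := by
  induction m with
  | zero => rfl
  | succ m ih => show 1 * stirling (m + 1) 1 + stirling (m + 1) 0 = 1; rw [ih]; rfl

lemma covcard (m : ℕ) : ∀ j : ℕ,
    ((univ : Finset (Fin m → Fin (j + 1))).filter Cov).card =
      j.factorial * stirling (m + 1) (j + 1) := by
  induction m with
  | zero =>
    intro j
    cases j with
    | zero => rw [covcard_all]; rfl
    | succ j =>
      rw [Finset.card_eq_zero.2 (Finset.filter_eq_empty_iff.2 fun f _ => ?_)]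
      · show 0 = (j+1).factorial * stirling 1 (j + 2)
        show 0 = (j+1).factorial * ((j + 2) * stirling 0 (j + 2) + stirling 0 (j + 1))
        rfl
      · intro hcov
        obtain ⟨i, -⟩ := hcov ⟨1, by omega⟩ (by
          intro h0
          rw [Fin.ext_iff] at h0
          simp at h0)
        exact i.elim0
  | succ m ih =>
    intro j
    cases j with
    | zero =>
      rw [covcard_all]
      show 1 = 1 * stirling (m + 2) 1
      rw [stirling_one]
    | succ j =>
      rw [covcard_step1 m j, ih (j + 1), ih j]
      have hst : stirling (m + 2) (j + 2) =
          (j + 2) * stirling (m + 1) (j + 2) + stirling (m + 1) (j + 1) := rfl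
      rw [hst, Nat.factorial_succ]
      ring

lemma lonesum_iff_stair {m n : ℕ} (M : Fin m → Fin n → Fin 2) :
    IsLonesum M ↔ Stair M :=
  ⟨lonesum_to_stair M, fun h N hr hc => stair_unique M N h hr hc⟩

/-- The number of binary lonesum `m×n` matrices is
`Σ_{j=0}^{min(m,n)} (j!)² · S(m+1, j+1) · S(n+1, j+1)`. -/
theorem card_binary_lonesum_eq_partition_sum (m n : ℕ) :
    Nat.card {M : Fin m → Fin n → Fin 2 // IsLonesum M} =
      ∑ j ∈ Finset.range (min m n + 1),
        j.factorial ^ 2 * stirling (m + 1) (j + 1) * stirling (n + 1) (j + 1) := by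
  have h1 : Nat.card {M : Fin m → Fin n → Fin 2 // IsLonesum M} =
      Nat.card {M : Fin m → Fin n → Fin 2 // Stair M} :=
    Nat.card_congr (Equiv.subtypeEquivRight fun M => lonesum_iff_stair M)
  rw [h1, Nat.card_eq_fintype_card, Fintype.card_subtype, count_stair]
  refine Finset.sum_congr rfl fun j _ => ?_
  rw [covcard m j, covcard n j]
  ring
end

section
/- A ternary (3-ary) matrix is a lonesum matrix if and only if each of its 2×2 submatrices is equivalent (up to permuting rows and permuting columns) to a matrix of one of the five forms (2, 2; c, d), (2, b; 2, d), (2, b; c, 0), (a, b; 0, 0), (a, 0; c, 0), where a, b, c, d range over {0, 1, 2}. -/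
/-- Two matrices are equivalent if one is obtained from the other by permuting
rows and permuting columns. -/
def EquivMat {q m n : ℕ} (M N : Fin m → Fin n → Fin q) : Prop :=
  ∃ (σ : Equiv.Perm (Fin m)) (τ : Equiv.Perm (Fin n)), ∀ i j, M i j = N (σ i) (τ j)

/-- `N` is one of the five ternary standard forms `(2, 2; c, d)`, `(2, b; 2, d)`,
`(2, b; c, 0)`, `(a, b; 0, 0)`, `(a, 0; c, 0)` with `a, b, c, d ∈ {0, 1, 2}`. -/
def IsStandardForm3 (N : Fin 2 → Fin 2 → Fin 3) : Prop :=
  ∃ a b c d : Fin 3,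
    N = ![![2, 2], ![c, d]] ∨
    N = ![![2, b], ![2, d]] ∨
    N = ![![2, b], ![c, 0]] ∨
    N = ![![a, b], ![0, 0]] ∨
    N = ![![a, 0], ![c, 0]]

set_option linter.unreachableTactic false
set_option linter.unusedTactic false

def Good (a b c d : Fin 3) : Prop :=
  (a.val = 2 ∨ b.val = 0 ∨ c.val = 0 ∨ d.val = 2) ∧
  (a.val = 0 ∨ b.val = 2 ∨ c.val = 2 ∨ d.val = 0)

lemma SF1 (c d : Fin 3) : IsStandardForm3 ![![2,2],![c,d]] := ⟨0,0,c,d, Or.inl rfl⟩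
lemma SF2 (b d : Fin 3) : IsStandardForm3 ![![2,b],![2,d]] := ⟨0,b,0,d, Or.inr (Or.inl rfl)⟩
lemma SF3 (b c : Fin 3) : IsStandardForm3 ![![2,b],![c,0]] := ⟨0,b,c,0, Or.inr (Or.inr (Or.inl rfl))⟩
lemma SF4 (a b : Fin 3) : IsStandardForm3 ![![a,b],![0,0]] := ⟨a,b,0,0, Or.inr (Or.inr (Or.inr (Or.inl rfl)))⟩
lemma SF5 (a c : Fin 3) : IsStandardForm3 ![![a,0],![c,0]] := ⟨a,0,c,0, Or.inr (Or.inr (Or.inr (Or.inr rfl)))⟩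

lemma good_sf (N : Fin 2 → Fin 2 → Fin 3) (h : IsStandardForm3 N) :
    Good (N 0 0) (N 0 1) (N 1 0) (N 1 1) := by
  obtain ⟨a, b, c, d, h | h | h | h | h⟩ := h <;> subst h <;>
    constructor <;> simp [Good] <;> omega

lemma good_row {a b c d : Fin 3} (h : Good a b c d) : Good c d a b := by
  unfold Good at *; tauto

lemma good_col {a b c d : Fin 3} (h : Good a b c d) : Good b a d c := by
  unfold Good at *; tauto

lemma EM_id' {q : ℕ} (P : Fin 2 → Fin 2 → Fin q) : EquivMat P P :=
  ⟨Equiv.refl _, Equiv.refl _, fun _ _ => rfl⟩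

lemma EM_row {q : ℕ} (a b c d : Fin q) :
    EquivMat ![![a,b],![c,d]] ![![c,d],![a,b]] := by
  refine ⟨Equiv.swap 0 1, Equiv.refl _, ?_⟩
  intro i j
  fin_cases i <;> fin_cases j <;> simp [Equiv.swap_apply_left, Equiv.swap_apply_right]

lemma EM_col {q : ℕ} (a b c d : Fin q) :
    EquivMat ![![a,b],![c,d]] ![![b,a],![d,c]] := by
  refine ⟨Equiv.refl _, Equiv.swap 0 1, ?_⟩
  intro i j
  fin_cases i <;> fin_cases j <;> simp [Equiv.swap_apply_left, Equiv.swap_apply_right]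

lemma EM_both {q : ℕ} (a b c d : Fin q) :
    EquivMat ![![a,b],![c,d]] ![![d,c],![b,a]] := by
  refine ⟨Equiv.swap 0 1, Equiv.swap 0 1, ?_⟩
  intro i j
  fin_cases i <;> fin_cases j <;> simp [Equiv.swap_apply_left, Equiv.swap_apply_right]

lemma fin3_eq_of_val {a : Fin 3} {k : ℕ} (h : a.val = k) (hk : k < 3) : a = ⟨k, hk⟩ :=
  Fin.ext h

lemma good_exists {a b c d : Fin 3} (h : Good a b c d) :
    ∃ N : Fin 2 → Fin 2 → Fin 3, IsStandardForm3 N ∧ EquivMat ![![a,b],![c,d]] N := by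
  obtain ⟨h1, h2⟩ := h
  have e2 : ∀ x : Fin 3, x.val = 2 → x = 2 := by decide
  have e0 : ∀ x : Fin 3, x.val = 0 → x = 0 := by decide
  rcases h1 with ha | hb | hc | hd
  · have ha := e2 a ha; subst ha
    rcases h2 with h | h | h | h
    · simp at h
    · have := e2 b h; subst this; exact ⟨_, SF1 c d, EM_id' _⟩
    · have := e2 c h; subst this; exact ⟨_, SF2 b d, EM_id' _⟩
    · have := e0 d h; subst this; exact ⟨_, SF3 b c, EM_id' _⟩
  · have hb := e0 b hb; subst hb
    rcases h2 with h | h | h | h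
    · have := e0 a h; subst this; exact ⟨_, SF4 c d, EM_row _ _ _ _⟩
    · simp at h
    · have := e2 c h; subst this; exact ⟨_, SF3 d a, EM_row _ _ _ _⟩
    · have := e0 d h; subst this; exact ⟨_, SF5 a c, EM_id' _⟩
  · have hc := e0 c hc; subst hc
    rcases h2 with h | h | h | h
    · have := e0 a h; subst this; exact ⟨_, SF5 b d, EM_col _ _ _ _⟩
    · have := e2 b h; subst this; exact ⟨_, SF3 a d, EM_col _ _ _ _⟩
    · simp at h
    · have := e0 d h; subst this; exact ⟨_, SF4 a b, EM_id' _⟩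
  · have hd := e2 d hd; subst hd
    rcases h2 with h | h | h | h
    · have := e0 a h; subst this; exact ⟨_, SF3 c b, EM_both _ _ _ _⟩
    · have := e2 b h; subst this; exact ⟨_, SF2 a c, EM_col _ _ _ _⟩
    · have := e2 c h; subst this; exact ⟨_, SF1 a b, EM_row _ _ _ _⟩
    · simp at h

lemma perm2 : ∀ σ : Equiv.Perm (Fin 2), σ = Equiv.refl _ ∨ σ = Equiv.swap 0 1 := by
  decide

lemma exists_good {a b c d : Fin 3}
    (h : ∃ N : Fin 2 → Fin 2 → Fin 3, IsStandardForm3 N ∧ EquivMat ![![a,b],![c,d]] N) :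
    Good a b c d := by
  obtain ⟨N, hN, σ, τ, hE⟩ := h
  have gN := good_sf N hN
  have h00 := hE 0 0
  have h01 := hE 0 1
  have h10 := hE 1 0
  have h11 := hE 1 1
  simp only [Matrix.cons_val', Matrix.cons_val_zero, Matrix.cons_val_one, Matrix.head_cons,
    Matrix.empty_val', Matrix.cons_val_fin_one, Matrix.head_fin_const] at h00 h01 h10 h11
  have hs0 : (Equiv.swap (0 : Fin 2) 1) 0 = 1 := by decide
  have hs1 : (Equiv.swap (0 : Fin 2) 1) 1 = 0 := by decide
  rcases perm2 σ with hσ | hσ <;> rcases perm2 τ with hτ | hτ <;>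
    subst hσ <;> subst hτ <;>
    simp only [Equiv.refl_apply, hs0, hs1] at h00 h01 h10 h11 <;>
    rw [h00, h01, h10, h11]
  · exact gN
  · exact good_col gN
  · exact good_row gN
  · exact good_col (good_row gN)

lemma sum_eq_of_two {α : Type*} [Fintype α] [DecidableEq α] (f g : α → ℕ) (x y : α)
    (hxy : x ≠ y) (h2 : f x + f y = g x + g y)
    (h : ∀ z, z ≠ x → z ≠ y → f z = g z) : ∑ z, f z = ∑ z, g z := by
  have hy : y ∈ Finset.univ.erase x := Finset.mem_erase.2 ⟨hxy.symm, Finset.mem_univ y⟩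
  rw [← Finset.add_sum_erase _ f (Finset.mem_univ x), ← Finset.add_sum_erase _ g (Finset.mem_univ x),
    ← Finset.add_sum_erase _ f hy, ← Finset.add_sum_erase _ g hy]
  have hc : ∑ z ∈ (Finset.univ.erase x).erase y, f z = ∑ z ∈ (Finset.univ.erase x).erase y, g z := by
    refine Finset.sum_congr rfl fun z hz => ?_
    simp only [Finset.mem_erase] at hz
    exact h z hz.2.1 hz.1
  omega


lemma swap_not_lonesum {m n : ℕ} (M : Fin m → Fin n → Fin 3) (i1 i2 : Fin m) (j1 j2 : Fin n)
    (hi : i1 ≠ i2) (hj : j1 ≠ j2)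
    (ha : (M i1 j1).val ≤ 1) (hb : 1 ≤ (M i1 j2).val)
    (hc : 1 ≤ (M i2 j1).val) (hd : (M i2 j2).val ≤ 1) :
    ¬ IsLonesum M := by
  intro hL
  set N : Fin m → Fin n → Fin 3 := fun i j =>
    if i = i1 then
      (if j = j1 then ⟨(M i1 j1).val + 1, by omega⟩ else
       if j = j2 then ⟨(M i1 j2).val - 1, by have := (M i1 j2).isLt; omega⟩ else M i j)
    else if i = i2 then
      (if j = j1 then ⟨(M i2 j1).val - 1, by have := (M i2 j1).isLt; omega⟩ else
       if j = j2 then ⟨(M i2 j2).val + 1, by omega⟩ else M i j)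
    else M i j with hNdef
  have hN11 : (N i1 j1).val = (M i1 j1).val + 1 := by simp [hNdef]
  have hN12 : (N i1 j2).val = (M i1 j2).val - 1 := by simp [hNdef, hj.symm]
  have hN21 : (N i2 j1).val = (M i2 j1).val - 1 := by simp [hNdef, hi.symm]
  have hN22 : (N i2 j2).val = (M i2 j2).val + 1 := by simp [hNdef, hi.symm, hj.symm]
  have hNrow1 : ∀ j, j ≠ j1 → j ≠ j2 → N i1 j = M i1 j := by
    intro j h1 h2; simp [hNdef, h1, h2]
  have hNrow2 : ∀ j, j ≠ j1 → j ≠ j2 → N i2 j = M i2 j := by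
    intro j h1 h2; simp [hNdef, h1, h2, hi.symm]
  have hNother : ∀ i j, i ≠ i1 → i ≠ i2 → N i j = M i j := by
    intro i j h1 h2; simp [hNdef, h1, h2]
  have hrows : ∀ i, ∑ j, (N i j : ℕ) = ∑ j, (M i j : ℕ) := by
    intro i
    by_cases h1 : i = i1
    · subst h1
      exact sum_eq_of_two _ _ j1 j2 hj (by omega) (fun z hz1 hz2 => by rw [hNrow1 z hz1 hz2])
    · by_cases h2 : i = i2
      · subst h2
        exact sum_eq_of_two _ _ j1 j2 hj (by omega) (fun z hz1 hz2 => by rw [hNrow2 z hz1 hz2])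
      · exact Finset.sum_congr rfl fun j _ => by rw [hNother i j h1 h2]
  have hcols : ∀ j, ∑ i, (N i j : ℕ) = ∑ i, (M i j : ℕ) := by
    intro j
    by_cases h1 : j = j1
    · subst h1
      refine sum_eq_of_two _ _ i1 i2 hi (by omega) (fun z hz1 hz2 => by rw [hNother z _ hz1 hz2])
    · by_cases h2 : j = j2
      · subst h2
        refine sum_eq_of_two _ _ i1 i2 hi (by omega) (fun z hz1 hz2 => by rw [hNother z _ hz1 hz2])
      · refine Finset.sum_congr rfl fun i _ => ?_
        by_cases hi1 : i = i1
        · subst hi1; rw [hNrow1 j h1 h2]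
        · by_cases hi2 : i = i2
          · subst hi2; rw [hNrow2 j h1 h2]
          · rw [hNother i j hi1 hi2]
  have := hL N hrows hcols
  have : N i1 j1 = M i1 j1 := by rw [this]
  have := congrArg Fin.val this
  omega

lemma cycle_false {m n : ℕ} (M : Fin m → Fin n → Fin 3)
    (star : ∀ i1 i2 j1 j2, i1 ≠ i2 → j1 ≠ j2 → 1 ≤ (M i1 j2).val → (M i1 j1).val ≤ 1 →
      (M i2 j2).val ≤ 1 → (M i2 j1).val = 0)
    (k : ℕ) (hk : 2 ≤ k) (I : ℕ → Fin m) (J : ℕ → Fin n)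
    (hI : ∀ a b, a < k → b < k → I a = I b → a = b)
    (hJ : ∀ a b, a < k → b < k → J a = J b → a = b)
    (hplus : ∀ s, s < k → (M (I s) (J s)).val ≤ 1)
    (hminus : ∀ s, s + 1 < k → 1 ≤ (M (I s) (J (s+1))).val)
    (hclose : 1 ≤ (M (I (k-1)) (J 0)).val) : False := by
  have claim : ∀ r, r + 1 < k → (M (I (r+1)) (J 0)).val = 0 := by
    intro r
    induction r with
    | zero =>
      intro h1
      refine star (I 0) (I 1) (J 0) (J 1) ?_ ?_ (hminus 0 h1) (hplus 0 (by omega))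
        (hplus 1 h1)
      · intro he; exact absurd (hI 0 1 (by omega) h1 he) (by omega)
      · intro he; exact absurd (hJ 0 1 (by omega) h1 he) (by omega)
    | succ r ih =>
      intro h2
      have ih' := ih (by omega)
      refine star (I (r+1)) (I (r+2)) (J 0) (J (r+2)) ?_ ?_ (hminus (r+1) h2)
        (by omega) (hplus (r+2) h2)
      · intro he; exact absurd (hI (r+1) (r+2) (by omega) h2 he) (by omega)
      · intro he; exact absurd (hJ 0 (r+2) (by omega) h2 he) (by omega)
  have hk1 : k - 2 + 1 = k - 1 := by omega
  have := claim (k-2) (by omega)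
  rw [hk1] at this
  omega


lemma lonesum_of_good {m n : ℕ} (M : Fin m → Fin n → Fin 3)
    (G : ∀ i1 i2 j1 j2, i1 ≠ i2 → j1 ≠ j2 →
      Good (M i1 j1) (M i1 j2) (M i2 j1) (M i2 j2)) :
    IsLonesum M := by
  classical
  intro N hrow hcol
  by_contra hne
  have star : ∀ i1 i2 j1 j2, i1 ≠ i2 → j1 ≠ j2 → 1 ≤ (M i1 j2).val → (M i1 j1).val ≤ 1 →
      (M i2 j2).val ≤ 1 → (M i2 j1).val = 0 := by
    intro i1 i2 j1 j2 hi hj hb ha hd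
    obtain ⟨h1, -⟩ := G i1 i2 j1 j2 hi hj
    omega
  have rowstep : ∀ (i : Fin m) (jj : Fin n), (M i jj).val < (N i jj).val →
      ∃ j', (N i j').val < (M i j').val := by
    intro i jj hlt
    by_contra hcon
    push_neg at hcon
    have hlt2 : ∑ j', ((M i j' : ℕ)) < ∑ j', ((N i j' : ℕ)) :=
      Finset.sum_lt_sum (fun x _ => hcon x) ⟨jj, Finset.mem_univ _, hlt⟩
    rw [hrow i] at hlt2
    exact lt_irrefl _ hlt2
  have colstep : ∀ (i : Fin m) (jj : Fin n), (N i jj).val < (M i jj).val →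
      ∃ i', (M i' jj).val < (N i' jj).val := by
    intro i jj hlt
    by_contra hcon
    push_neg at hcon
    have hlt2 : ∑ i', ((N i' jj : ℕ)) < ∑ i', ((M i' jj : ℕ)) :=
      Finset.sum_lt_sum (fun x _ => hcon x) ⟨i, Finset.mem_univ _, hlt⟩
    rw [hcol jj] at hlt2
    exact lt_irrefl _ hlt2
  have hpos : ∃ i j, (M i j).val < (N i j).val := by
    have hex : ∃ i j, N i j ≠ M i j := by
      by_contra hc; push_neg at hc
      exact hne (funext fun i => funext fun j => hc i j)
    obtain ⟨i, j, hnij⟩ := hex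
    rcases Nat.lt_or_ge (M i j).val (N i j).val with h | h
    · exact ⟨i, j, h⟩
    · have hlt : (N i j).val < (M i j).val := by
        rcases Nat.lt_or_ge (N i j).val (M i j).val with h' | h'
        · exact h'
        · exact absurd (Fin.ext (le_antisymm h h') : N i j = M i j) hnij
      obtain ⟨i', h'⟩ := colstep i j hlt
      exact ⟨i', j, h'⟩
  obtain ⟨i0, j0, hp0⟩ := hpos
  set P : ℕ → Prop := fun k => ∃ (I : ℕ → Fin m) (J : ℕ → Fin n),
      (∀ a b, a < k → b < k → I a = I b → a = b) ∧
      (∀ a b, a < k → b < k → J a = J b → a = b) ∧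
      (∀ s, s < k → (M (I s) (J s)).val < (N (I s) (J s)).val) ∧
      (∀ s, s + 1 < k → (N (I s) (J (s+1))).val < (M (I s) (J (s+1))).val) with hPdef
  have hP1 : P 1 := by
    refine ⟨fun _ => i0, fun _ => j0, ?_, ?_, ?_, ?_⟩
    · intro a b ha hb _; omega
    · intro a b ha hb _; omega
    · intro s _; exact hp0
    · intro s hs; omega
  have hbound : ∀ k, P k → k ≤ m := by
    intro k hk
    obtain ⟨I, J, hI, -, -, -⟩ := hk
    have hinj : Function.Injective (fun s : Fin k => I s.val) := by
      intro a b hab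
      exact Fin.ext (hI a.val b.val a.isLt b.isLt hab)
    simpa using Fintype.card_le_of_injective _ hinj
  have hm1 : 1 ≤ m := i0.pos
  set K := Nat.findGreatest P m with hKdef
  have hPK : P K := Nat.findGreatest_spec hm1 hP1
  have hK1 : 1 ≤ K := Nat.le_findGreatest hm1 hP1
  have hmax : ¬ P (K + 1) := by
    intro hp
    rcases Nat.lt_or_ge m (K + 1) with h | h
    · exact absurd (hbound _ hp) (by omega)
    · exact Nat.findGreatest_is_greatest (by omega) h hp
  obtain ⟨I, J, hI, hJ, hplus, hminus⟩ := hPK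
  -- convert N-facts to M-facts
  have Mplus : ∀ s, s < K → (M (I s) (J s)).val ≤ 1 := by
    intro s hs
    have := hplus s hs
    have := (N (I s) (J s)).isLt
    omega
  have Mminus : ∀ s, s + 1 < K → 1 ≤ (M (I s) (J (s+1))).val := by
    intro s hs
    have := hminus s hs
    omega
  -- extend from the last index
  obtain ⟨c, hc⟩ := rowstep (I (K-1)) (J (K-1)) (hplus (K-1) (by omega))
  by_cases hcold : ∃ t, t < K ∧ J t = c
  · -- cycle of the first kind
    obtain ⟨t, htK, hjt⟩ := hcold
    have htne : t ≠ K - 1 := by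
      intro h
      have h2 : J (K - 1) = c := by rw [← h]; exact hjt
      have h3 := hplus (K-1) (by omega)
      rw [h2] at h3
      omega
    have htlt : t < K - 1 := by omega
    refine cycle_false M star (K - t) (by omega) (fun s => I (t + s)) (fun s => J (t + s))
      ?_ ?_ ?_ ?_ ?_
    · intro a b ha hb hab
      have := hI (t+a) (t+b) (by omega) (by omega) hab
      omega
    · intro a b ha hb hab
      have := hJ (t+a) (t+b) (by omega) (by omega) hab
      omega
    · intro s hs; exact Mplus (t+s) (by omega)
    · intro s hs; exact Mminus (t+s) (by omega)
    · show 1 ≤ (M (I (t + (K - t - 1))) (J t)).val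
      have h1 : t + (K - t - 1) = K - 1 := by omega
      rw [h1, hjt]
      omega
  · push_neg at hcold
    obtain ⟨r, hr⟩ := colstep (I (K-1)) c hc
    by_cases hrold : ∃ t, t < K ∧ I t = r
    · -- cycle of the second kind
      obtain ⟨t, htK, hit⟩ := hrold
      have htne : t ≠ K - 1 := by
        intro h
        rw [h] at hit
        rw [hit] at hc
        omega
      have htlt : t < K - 1 := by omega
      refine cycle_false M star (K - t) (by omega) (fun s => I (t + s))
        (fun s => if s = 0 then c else J (t + s)) ?_ ?_ ?_ ?_ ?_
      · intro a b ha hb hab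
        have := hI (t+a) (t+b) (by omega) (by omega) hab
        omega
      · intro a b ha hb hab
        rcases Nat.eq_zero_or_pos a with ha0 | ha0 <;> rcases Nat.eq_zero_or_pos b with hb0 | hb0
        · omega
        · subst ha0
          simp only [if_pos rfl, if_neg (by omega : ¬ b = 0)] at hab
          exact absurd hab.symm (hcold (t+b) (by omega))
        · subst hb0
          simp only [if_pos rfl, if_neg (by omega : ¬ a = 0)] at hab
          exact absurd hab (hcold (t+a) (by omega))
        · simp only [if_neg (by omega : ¬ a = 0), if_neg (by omega : ¬ b = 0)] at hab
          have := hJ (t+a) (t+b) (by omega) (by omega) hab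
          omega
      · intro s hs
        rcases Nat.eq_zero_or_pos s with hs0 | hs0
        · subst hs0
          show (M (I t) c).val ≤ 1
          rw [hit]
          have := (N r c).isLt
          omega
        · show (M (I (t + s)) (if s = 0 then c else J (t + s))).val ≤ 1
          rw [if_neg (by omega : ¬ s = 0)]
          exact Mplus (t+s) (by omega)
      · intro s hs
        show 1 ≤ (M (I (t + s)) (if s + 1 = 0 then c else J (t + (s+1)))).val
        rw [if_neg (by omega : ¬ s + 1 = 0)]
        exact Mminus (t+s) (by omega)
      · show 1 ≤ (M (I (t + (K - t - 1))) c).val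
        have h1 : t + (K - t - 1) = K - 1 := by omega
        rw [h1]
        omega
    · -- extension: contradiction with maximality
      push_neg at hrold
      apply hmax
      refine ⟨fun s => if s = K then r else I s, fun s => if s = K then c else J s,
        ?_, ?_, ?_, ?_⟩
      · intro a b ha hb hab
        by_cases haK : a = K
        · by_cases hbK : b = K
          · omega
          · subst haK
            simp only [if_pos rfl, if_neg hbK] at hab
            exact absurd hab.symm (hrold b (by omega))
        · by_cases hbK : b = K
          · subst hbK
            simp only [if_neg haK, if_pos rfl] at hab
            exact absurd hab (hrold a (by omega))
          · simp only [if_neg haK, if_neg hbK] at hab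
            exact hI a b (by omega) (by omega) hab
      · intro a b ha hb hab
        by_cases haK : a = K
        · by_cases hbK : b = K
          · omega
          · subst haK
            simp only [if_pos rfl, if_neg hbK] at hab
            exact absurd hab.symm (hcold b (by omega))
        · by_cases hbK : b = K
          · subst hbK
            simp only [if_neg haK, if_pos rfl] at hab
            exact absurd hab (hcold a (by omega))
          · simp only [if_neg haK, if_neg hbK] at hab
            exact hJ a b (by omega) (by omega) hab
      · intro s hs
        by_cases hsK : s = K
        · subst hsK
          simp only [if_pos rfl]
          exact hr
        · simp only [if_neg hsK]
          exact hplus s (by omega)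
      · intro s hs
        have hsK : ¬ s = K := by omega
        by_cases hs1 : s + 1 = K
        · simp only [if_neg hsK, if_pos hs1]
          have hKs : s = K - 1 := by omega
          rw [hKs]
          exact hc
        · simp only [if_neg hsK, if_neg hs1]
          exact hminus s (by omega)


/-- A ternary matrix is a lonesum matrix if and only if each of its `2×2`
submatrices is equivalent to one of the five standard forms. -/
theorem ternary_lonesum_iff_submatrices (m n : ℕ) (M : Fin m → Fin n → Fin 3) :
    IsLonesum M ↔
      ∀ (i1 i2 : Fin m) (j1 j2 : Fin n), i1 < i2 → j1 < j2 →
        ∃ N : Fin 2 → Fin 2 → Fin 3, IsStandardForm3 N ∧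
          EquivMat ![![M i1 j1, M i1 j2], ![M i2 j1, M i2 j2]] N := by
  constructor
  · intro hL i1 i2 j1 j2 hi hj
    have key : Good (M i1 j1) (M i1 j2) (M i2 j1) (M i2 j2) := by
      by_contra hg
      simp only [Good, not_and_or] at hg
      rcases hg with h | h
      · push_neg at h
        obtain ⟨h1, h2, h3, h4⟩ := h
        exact swap_not_lonesum M i1 i2 j1 j2 (ne_of_lt hi) (ne_of_lt hj)
          (by have := (M i1 j1).isLt; omega) (by omega) (by omega)
          (by have := (M i2 j2).isLt; omega) hL
      · push_neg at h
        obtain ⟨h1, h2, h3, h4⟩ := h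
        exact swap_not_lonesum M i1 i2 j2 j1 (ne_of_lt hi) (Ne.symm (ne_of_lt hj))
          (by have := (M i1 j2).isLt; omega) (by omega) (by omega)
          (by have := (M i2 j1).isLt; omega) hL
    exact good_exists key
  · intro h
    apply lonesum_of_good
    intro i1 i2 j1 j2 hi hj
    rcases lt_or_gt_of_ne hi with hi' | hi' <;> rcases lt_or_gt_of_ne hj with hj' | hj'
    · exact exists_good (h i1 i2 j1 j2 hi' hj')
    · exact good_col (exists_good (h i1 i2 j2 j1 hi' hj'))
    · exact good_row (exists_good (h i2 i1 j1 j2 hi' hj'))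
    · exact good_row (good_col (exists_good (h i2 i1 j2 j1 hi' hj')))
end

section
/- Let q ≥ 2. A q-ary m×n matrix M is a lonesum matrix if and only if every 2×2 submatrix of M is a lonesum matrix. Consequently, every minimal non-lonesum q-ary matrix (a non-lonesum matrix all of whose proper submatrices are lonesum) has size 2×2. -/
-- helper: periodic function equals value at t % k
lemma periodic_mod {α : Type*} (f : ℕ → α) (k : ℕ) (hf : ∀ t, f (t + k) = f t) (t : ℕ) :
    f t = f (t % k) := by
  conv_lhs => rw [← Nat.mod_add_div t k]
  generalize t / k = j
  induction j with
  | zero => simp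
  | succ j ih =>
    have h : t % k + k * (j + 1) = (t % k + k * j) + k := by ring
    rw [h, hf, ih]

lemma succ_mod_eq_zero {k t : ℕ} (hk : 0 < k) (h : t % k = k - 1) : (t + 1) % k = 0 := by
  rw [Nat.add_mod, h]
  have : 1 % k = 1 % k := rfl
  rcases Nat.eq_or_lt_of_le hk with h1 | h1
  · simp [← h1]
  · have : (1 : ℕ) % k = 1 := Nat.mod_eq_of_lt h1
    rw [this]
    have : k - 1 + 1 = k := by omega
    rw [this, Nat.mod_self]

lemma succ_mod_eq_succ {k t : ℕ} (hk : 0 < k) (h : t % k ≠ k - 1) : (t + 1) % k = t % k + 1 := by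
  have h1 : t % k < k := Nat.mod_lt _ hk
  rw [Nat.add_mod]
  have h2 : (1 : ℕ) % k ≤ 1 := Nat.mod_le _ _
  have h3 : t % k + 1 < k := by omega
  have h4 : (1 : ℕ) % k = 1 := by
    rcases Nat.eq_or_lt_of_le hk with h5 | h5
    · omega
    · exact Nat.mod_eq_of_lt h5
  rw [h4, Nat.mod_eq_of_lt h3]

lemma mod_add_ne {k t d : ℕ} (h0 : 0 < d) (hd : d < k) : (t + d) % k ≠ t % k := by
  intro h
  have : t ≡ t + d [MOD k] := h.symm
  rw [Nat.modEq_iff_dvd' (Nat.le_add_right _ _)] at this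
  simp only [Nat.add_sub_cancel_left] at this
  have := Nat.le_of_dvd h0 this
  omega

-- sum sign lemmas
lemma exists_pos_of_sum_zero {α : Type*} [Fintype α] (f : α → ℤ) (h0 : ∑ x, f x = 0)
    {x : α} (hx : f x < 0) : ∃ y, 0 < f y := by
  by_contra hc
  push_neg at hc
  have : ∑ y, f y < ∑ _y : α, (0 : ℤ) :=
    Finset.sum_lt_sum (fun i _ => hc i) ⟨x, Finset.mem_univ x, hx⟩
  simp [h0] at this

lemma exists_neg_of_sum_zero {α : Type*} [Fintype α] (f : α → ℤ) (h0 : ∑ x, f x = 0)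
    {x : α} (hx : 0 < f x) : ∃ y, f y < 0 := by
  obtain ⟨y, hy⟩ := exists_pos_of_sum_zero (fun a => -f a) (by simp [h0]) (x := x) (by simpa using hx)
  exact ⟨y, by omega⟩

-- sum splitting
lemma sum_split_two {α : Type*} [Fintype α] [DecidableEq α] (f : α → ℕ) (a b : α)
    (hab : a ≠ b) :
    ∑ x, f x = f a + f b + ∑ x ∈ (Finset.univ.erase a).erase b, f x := by
  rw [← Finset.add_sum_erase _ f (Finset.mem_univ a)]
  rw [← Finset.add_sum_erase _ f (Finset.mem_erase.mpr ⟨hab.symm, Finset.mem_univ b⟩)]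
  ring

lemma not_lonesum_A {q : ℕ} (a b c d : Fin q) (ha : (a : ℕ) + 1 < q) (hb : 0 < (b : ℕ))
    (hc : 0 < (c : ℕ)) (hd : (d : ℕ) + 1 < q) : ¬ IsLonesum ![![a, b], ![c, d]] := by
  intro h
  have hE := h ![![⟨(a : ℕ) + 1, ha⟩, ⟨(b : ℕ) - 1, by omega⟩],
                 ![⟨(c : ℕ) - 1, by omega⟩, ⟨(d : ℕ) + 1, hd⟩]]
    (by intro i; fin_cases i <;> simp [Fin.sum_univ_two] <;> omega)
    (by intro j; fin_cases j <;> simp [Fin.sum_univ_two] <;> omega)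
  have h1 := congrFun (congrFun hE 0) 0
  simp at h1
  have h2 : (a : ℕ) + 1 = (a : ℕ) := congrArg Fin.val h1
  omega

lemma not_lonesum_B {q : ℕ} (a b c d : Fin q) (ha : 0 < (a : ℕ)) (hb : (b : ℕ) + 1 < q)
    (hc : (c : ℕ) + 1 < q) (hd : 0 < (d : ℕ)) : ¬ IsLonesum ![![a, b], ![c, d]] := by
  intro h
  have hE := h ![![⟨(a : ℕ) - 1, by omega⟩, ⟨(b : ℕ) + 1, hb⟩],
                 ![⟨(c : ℕ) + 1, hc⟩, ⟨(d : ℕ) - 1, by omega⟩]]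
    (by intro i; fin_cases i <;> simp [Fin.sum_univ_two] <;> omega)
    (by intro j; fin_cases j <;> simp [Fin.sum_univ_two] <;> omega)
  have h1 := congrFun (congrFun hE 0) 0
  simp at h1
  have h2 : (a : ℕ) - 1 = (a : ℕ) := congrArg Fin.val h1
  omega

def IsCycle {m n : ℕ} (D : Fin m → Fin n → ℤ) (k : ℕ) (r : ℕ → Fin m) (c : ℕ → Fin n) : Prop :=
  (∀ t, r (t + k) = r t) ∧ (∀ t, c (t + k) = c t) ∧
  (∀ t, 0 < D (r t) (c t)) ∧ (∀ t, D (r t) (c (t + 1)) < 0)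

lemma no_cycle {m n : ℕ} (D : Fin m → Fin n → ℤ) (H L : Fin m → Fin n → Prop)
    (hHL : ∀ i j, ¬(H i j ∧ L i j))
    (hDH : ∀ i j, 0 < D i j → ¬ H i j)
    (hDL : ∀ i j, D i j < 0 → ¬ L i j)
    (hH : ∀ i j, H i j → D i j ≤ 0)
    (hC : ∀ i i' j j', i ≠ i' → j ≠ j' → H i j ∨ L i j' ∨ L i' j ∨ H i' j') :
    ∀ k, 0 < k → ∀ r c, ¬ IsCycle D k r c := by
  intro k
  induction k using Nat.strong_induction_on with
  | _ k ih =>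
    intro hk r c hcyc
    obtain ⟨hrp, hcp, hpos, hneg⟩ := hcyc
    rcases Nat.eq_or_lt_of_le hk with h1 | h2
    · -- k = 1
      have hc1 : c 1 = c 0 := by
        have := hcp 0
        rw [← h1] at this
        simpa using this
      have := hneg 0
      rw [hc1] at this
      exact absurd (hpos 0) (by omega)
    · -- k ≥ 2
      by_cases hrd : ∃ a b, a < b ∧ b < k ∧ r a = r b
      · obtain ⟨a, b, hab, hbk, hreq⟩ := hrd
        by_cases hk1 : b - a = k - 1
        · -- then a = 0, b = k-1 : direct contradiction
          have ha0 : a = 0 := by omega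
          have hbk1 : b + 1 = k := by omega
          have h5 : c (b + 1) = c 0 := by
            have := hcp 0
            rw [← hbk1] at this
            simpa using this
          have h6 := hneg b
          rw [h5] at h6
          have h7 : r b = r 0 := by rw [← hreq, ha0]
          rw [h7] at h6
          have := hpos 0
          omega
        · -- shorten: k' = k - (b - a) with 2 ≤ k' < k
          set k' := k - (b - a) with hk'
          have hk'2 : 2 ≤ k' := by omega
          have hk'lt : k' < k := by omega
          apply ih k' hk'lt (by omega) (fun t => r (b + t % k'))
              (fun t => if t % k' = 0 then c a else c (b + t % k'))
          refine ⟨fun t => by simp [Nat.add_mod_right], fun t => by simp [Nat.add_mod_right], fun t => ?_, fun t => ?_⟩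
          · by_cases h0 : t % k' = 0
            · simp only [h0, if_pos rfl, Nat.add_zero]
              rw [hreq.symm]  -- careful direction
              exact hpos a
            · simp only [if_neg h0]
              exact hpos (b + t % k')
          · by_cases hlast : t % k' = k' - 1
            · have h5 : (t + 1) % k' = 0 := succ_mod_eq_zero (by omega) hlast
              simp only [h5, if_pos rfl, hlast]
              have harg : b + (k' - 1) = a + k - 1 := by omega
              have harg2 : (a + k - 1) + 1 = a + k := by omega
              have h6 := hneg (a + k - 1)
              rw [harg2, hcp a] at h6
              rw [harg]
              exact h6
            · have h5 : (t + 1) % k' = t % k' + 1 := succ_mod_eq_succ (by omega) hlast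
              have h5' : t % k' + 1 ≠ 0 := by omega
              simp only [h5, if_neg h5']
              have : b + (t % k' + 1) = (b + t % k') + 1 := by omega
              rw [this]
              exact hneg (b + t % k')
      · by_cases hcd : ∃ a b, a < b ∧ b < k ∧ c a = c b
        · obtain ⟨a, b, hab, hbk, hceq⟩ := hcd
          set k'' := b - a with hk''
          have hk''1 : 0 < k'' := by omega
          have hk''lt : k'' < k := by omega
          apply ih k'' hk''lt hk''1 (fun t => r (a + t % k'')) (fun t => c (a + t % k''))
          refine ⟨fun t => by simp [Nat.add_mod_right], fun t => by simp [Nat.add_mod_right],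
            fun t => hpos _, fun t => ?_⟩
          · show D (r (a + t % k'')) (c (a + (t + 1) % k'')) < 0
            by_cases hlast : t % k'' = k'' - 1
            · have h5 : (t + 1) % k'' = 0 := succ_mod_eq_zero hk''1 hlast
              rw [h5, hlast, Nat.add_zero]
              have harg : (a + (k'' - 1)) + 1 = a + k'' := by omega
              have h6 := hneg (a + (k'' - 1))
              rw [harg] at h6
              have : a + k'' = b := by omega
              rw [this] at h6
              rw [← hceq] at h6
              exact h6
            · have h5 : (t + 1) % k'' = t % k'' + 1 := succ_mod_eq_succ hk''1 hlast
              rw [h5]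
              have : a + (t % k'' + 1) = (a + t % k'') + 1 := by omega
              rw [this]
              exact hneg (a + t % k'')
        · -- injective case
          push_neg at hrd hcd
          have hk0 : 0 < k := hk
          have rne : ∀ x y : ℕ, x % k ≠ y % k → r x ≠ r y := by
            intro x y hxy
            rw [periodic_mod r k hrp x, periodic_mod r k hrp y]
            rcases Nat.lt_trichotomy (x % k) (y % k) with h | h | h
            · exact hrd _ _ h (Nat.mod_lt _ hk0)
            · exact absurd h hxy
            · exact fun he => hrd _ _ h (Nat.mod_lt _ hk0) he.symm
          have cne : ∀ x y : ℕ, x % k ≠ y % k → c x ≠ c y := by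
            intro x y hxy
            rw [periodic_mod c k hcp x, periodic_mod c k hcp y]
            rcases Nat.lt_trichotomy (x % k) (y % k) with h | h | h
            · exact hcd _ _ h (Nat.mod_lt _ hk0)
            · exact absurd h hxy
            · exact fun he => hcd _ _ h (Nat.mod_lt _ hk0) he.symm
          have rne1 : ∀ t, r (t + 1) ≠ r t := fun t => rne _ _ (mod_add_ne one_pos h2)
          have cne1 : ∀ t, c (t + 1) ≠ c t := fun t => cne _ _ (mod_add_ne one_pos h2)
          -- Claim B : L (r (t+s)) (c t) for 1 ≤ s ≤ k-1
          have claimB : ∀ s, 1 ≤ s → s ≤ k - 1 → ∀ t, L (r (t + s)) (c t) := by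
            intro s
            induction s with
            | zero => omega
            | succ s ihs =>
              intro _ hsk t
              by_cases hs0 : s = 0
              · subst hs0
                rcases hC (r (t + 1)) (r t) (c (t + 1)) (c t) (rne1 t) (cne1 t) with
                  h | h | h | h
                · exact absurd h (hDH _ _ (hpos (t + 1)))
                · exact h
                · exact absurd h (hDL _ _ (hneg t))
                · exact absurd h (hDH _ _ (hpos t))
              · have IHt := ihs (by omega) (by omega) t
                have hdist : c (t + s + 1) ≠ c t := by
                  apply cne
                  have hh : t + s + 1 = t + (s + 1) := by omega
                  rw [hh]
                  exact mod_add_ne (by omega) (by omega)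
                have hadd : t + (s + 1) = t + s + 1 := by omega
                rw [hadd]
                rcases hC (r (t + s + 1)) (r (t + s)) (c (t + s + 1)) (c t)
                    (rne1 (t + s)) hdist with h | h | h | h
                · exact absurd h (hDH _ _ (hpos (t + s + 1)))
                · exact h
                · exact absurd h (hDL _ _ (hneg (t + s)))
                · exact absurd ⟨h, IHt⟩ (hHL _ _)
          -- H (r 0) (c 2)
          have H02 : H (r 0) (c 2) := by
            rcases hC (r 1) (r 0) (c 1) (c 2) (rne1 0) (Ne.symm (cne1 1)) with h | h | h | h
            · exact absurd h (hDH _ _ (hpos 1))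
            · exact absurd h (hDL _ _ (hneg 1))
            · exact absurd h (hDL _ _ (hneg 0))
            · exact h
          rcases Nat.eq_or_lt_of_le h2 with hk2 | hk3
          · -- k = 2
            have hc20 : c 2 = c 0 := by
              have := hcp 0
              rw [← hk2] at this
              simpa using this
            rw [hc20] at H02
            exact absurd (hpos 0) (by have := hH _ _ H02; omega)
          · -- k ≥ 3
            have hB := claimB (k - 2) (by omega) (by omega) 2
            have harg : 2 + (k - 2) = k := by omega
            rw [harg] at hB
            have hr0 : r k = r 0 := by
              have := hrp 0
              simpa using this
            rw [hr0] at hB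
            exact hHL _ _ ⟨H02, hB⟩

lemma exists_cycle {m n : ℕ} (D : Fin m → Fin n → ℤ)
    (hrow : ∀ i, ∑ j, D i j = 0) (hcol : ∀ j, ∑ i, D i j = 0)
    {i0 : Fin m} {j0 : Fin n} (hD : D i0 j0 ≠ 0) :
    ∃ k, 0 < k ∧ ∃ r c, IsCycle D k r c := by
  -- get a positive entry
  have hstart : ∃ p : Fin m × Fin n, 0 < D p.1 p.2 := by
    rcases hD.lt_or_gt with h | h
    · obtain ⟨i1, hi1⟩ := exists_pos_of_sum_zero (fun i => D i j0) (hcol j0) h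
      exact ⟨(i1, j0), hi1⟩
    · exact ⟨(i0, j0), h⟩
  obtain ⟨p0, hp0⟩ := hstart
  -- stepping function
  have hstep : ∀ p : {p : Fin m × Fin n // 0 < D p.1 p.2},
      ∃ p' : {p : Fin m × Fin n // 0 < D p.1 p.2}, D p.val.1 p'.val.2 < 0 := by
    rintro ⟨⟨i, j⟩, hp⟩
    obtain ⟨j', hj'⟩ := exists_neg_of_sum_zero (fun j => D i j) (hrow i) hp
    obtain ⟨i', hi'⟩ := exists_pos_of_sum_zero (fun i => D i j') (hcol j') hj'
    exact ⟨⟨(i', j'), hi'⟩, hj'⟩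
  classical
  let g : {p : Fin m × Fin n // 0 < D p.1 p.2} → {p : Fin m × Fin n // 0 < D p.1 p.2} :=
    fun p => (hstep p).choose
  have hg : ∀ p, D p.val.1 (g p).val.2 < 0 := fun p => (hstep p).choose_spec
  let seq : ℕ → {p : Fin m × Fin n // 0 < D p.1 p.2} := fun t => g^[t] ⟨p0, hp0⟩
  have hseq : ∀ t, seq (t + 1) = g (seq t) := by
    intro t
    simp only [seq]
    rw [Function.iterate_succ_apply']
  obtain ⟨x, y, hlt, heq⟩ : ∃ x y, x < y ∧ seq x = seq y := by
    obtain ⟨a, b, hab, hE⟩ := Finite.exists_ne_map_eq_of_infinite seq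
    rcases hab.lt_or_gt with h | h
    · exact ⟨a, b, h, hE⟩
    · exact ⟨b, a, h, hE.symm⟩
  set k := y - x with hk
  have hk0 : 0 < k := by omega
  refine ⟨k, hk0, fun t => (seq (x + t % k)).val.1, fun t => (seq (x + t % k)).val.2,
    fun t => by simp [Nat.add_mod_right], fun t => by simp [Nat.add_mod_right],
    fun t => (seq (x + t % k)).property, fun t => ?_⟩
  have key : seq (x + (t + 1) % k) = g (seq (x + t % k)) := by
    by_cases h : t % k = k - 1
    · rw [succ_mod_eq_zero hk0 h, Nat.add_zero]
      have h1 : x + t % k + 1 = x + k := by omega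
      have h2 : x + k = y := by omega
      rw [← hseq, h1, h2, ← heq]
    · rw [succ_mod_eq_succ hk0 h]
      have h1 : x + (t % k + 1) = (x + t % k) + 1 := by omega
      rw [h1, hseq]
  show D (seq (x + t % k)).val.1 (seq (x + (t + 1) % k)).val.2 < 0
  rw [key]
  exact hg (seq (x + t % k))

lemma lonesum_of_two_by_two {q m n : ℕ} (hq : 2 ≤ q) (M : Fin m → Fin n → Fin q)
    (h2 : ∀ (i1 i2 : Fin m) (j1 j2 : Fin n), i1 < i2 → j1 < j2 →
      IsLonesum ![![M i1 j1, M i1 j2], ![M i2 j1, M i2 j2]]) : IsLonesum M := by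
  intro N hrow hcol
  set D : Fin m → Fin n → ℤ := fun i j => (N i j : ℤ) - (M i j : ℤ) with hDdef
  have hrowD : ∀ i, ∑ j, D i j = 0 := by
    intro i
    simp only [hDdef, Finset.sum_sub_distrib, sub_eq_zero]
    exact_mod_cast hrow i
  have hcolD : ∀ j, ∑ i, D i j = 0 := by
    intro j
    simp only [hDdef, Finset.sum_sub_distrib, sub_eq_zero]
    exact_mod_cast hcol j
  set H : Fin m → Fin n → Prop := fun i j => (M i j : ℕ) = q - 1 with hHdef
  set L : Fin m → Fin n → Prop := fun i j => (M i j : ℕ) = 0 with hLdef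
  have hHL : ∀ i j, ¬(H i j ∧ L i j) := by
    rintro i j ⟨h1, h2⟩
    simp only [hHdef, hLdef] at h1 h2
    omega
  have hmb : ∀ (i : Fin m) (j : Fin n), (M i j : ℕ) < q := fun i j => (M i j).isLt
  have hnb : ∀ (i : Fin m) (j : Fin n), (N i j : ℕ) < q := fun i j => (N i j).isLt
  have hDval : ∀ (i : Fin m) (j : Fin n), D i j = (N i j : ℤ) - (M i j : ℤ) := fun i j => rfl
  have hDH : ∀ i j, 0 < D i j → ¬ H i j := by
    intro i j hd hH'
    simp only [hHdef] at hH'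
    rw [hDval] at hd
    have : (M i j : ℕ) < (N i j : ℕ) := by exact_mod_cast by omega
    have := hnb i j
    omega
  have hDL : ∀ i j, D i j < 0 → ¬ L i j := by
    intro i j hd hL'
    simp only [hLdef] at hL'
    rw [hDval] at hd
    have : (N i j : ℕ) < (M i j : ℕ) := by exact_mod_cast by omega
    omega
  have hH : ∀ i j, H i j → D i j ≤ 0 := by
    intro i j hH'
    simp only [hHdef] at hH'
    have hle : (N i j : ℕ) ≤ (M i j : ℕ) := by have := hnb i j; omega
    rw [hDval]
    have : ((N i j : ℕ) : ℤ) ≤ ((M i j : ℕ) : ℤ) := by exact_mod_cast hle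
    omega
  have hC : ∀ i i' j j', i ≠ i' → j ≠ j' → H i j ∨ L i j' ∨ L i' j ∨ H i' j' := by
    intro i i' j j' hii hjj
    by_contra hcon
    push_neg at hcon
    obtain ⟨h1, h2', h3, h4⟩ := hcon
    simp only [hHdef, hLdef] at h1 h2' h3 h4
    have b1 : (M i j : ℕ) + 1 < q := by have := hmb i j; omega
    have b2 : 0 < (M i j' : ℕ) := by omega
    have b3 : 0 < (M i' j : ℕ) := by omega
    have b4 : (M i' j' : ℕ) + 1 < q := by have := hmb i' j'; omega
    rcases hii.lt_or_gt with hi | hi <;> rcases hjj.lt_or_gt with hj | hj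
    · exact not_lonesum_A _ _ _ _ b1 b2 b3 b4 (h2 i i' j j' hi hj)
    · exact not_lonesum_B _ _ _ _ b2 b1 b4 b3 (h2 i i' j' j hi hj)
    · exact not_lonesum_B _ _ _ _ b3 b4 b1 b2 (h2 i' i j j' hi hj)
    · exact not_lonesum_A _ _ _ _ b4 b3 b2 b1 (h2 i' i j' j hi hj)
  have hDzero : ∀ (i : Fin m) (j : Fin n), D i j = 0 := by
    intro i j
    by_contra hne
    obtain ⟨k, hk, r, c, hcyc⟩ := exists_cycle D hrowD hcolD hne
    exact no_cycle D H L hHL hDH hDL hH hC k hk r c hcyc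
  funext i j
  have := hDzero i j
  rw [hDval] at this
  have hval : (N i j : ℕ) = (M i j : ℕ) := by exact_mod_cast by omega
  exact Fin.ext hval

lemma two_by_two_of_lonesum {q m n : ℕ} (M : Fin m → Fin n → Fin q) (hM : IsLonesum M)
    (i1 i2 : Fin m) (j1 j2 : Fin n) (hi : i1 < i2) (hj : j1 < j2) :
    IsLonesum ![![M i1 j1, M i1 j2], ![M i2 j1, M i2 j2]] := by
  intro P hrow2 hcol2
  have hii : i1 ≠ i2 := ne_of_lt hi
  have hjj : j1 ≠ j2 := ne_of_lt hj
  classical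
  set N : Fin m → Fin n → Fin q := fun i =>
    if i = i1 then Function.update (Function.update (M i1) j1 (P 0 0)) j2 (P 0 1)
    else if i = i2 then Function.update (Function.update (M i2) j1 (P 1 0)) j2 (P 1 1)
    else M i with hNdef
  have e11 : N i1 j1 = P 0 0 := by
    simp only [hNdef, if_pos rfl]
    rw [Function.update_of_ne hjj, Function.update_self]
  have e12 : N i1 j2 = P 0 1 := by
    simp only [hNdef, if_pos rfl]
    rw [Function.update_self]
  have e21 : N i2 j1 = P 1 0 := by
    simp only [hNdef, if_neg hii.symm, eq_self_iff_true, if_true]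
    rw [Function.update_of_ne hjj, Function.update_self]
  have e22 : N i2 j2 = P 1 1 := by
    simp only [hNdef, if_neg hii.symm, eq_self_iff_true, if_true]
    rw [Function.update_self]
  have erow : ∀ i, i ≠ i1 → i ≠ i2 → N i = M i := by
    intro i h1 h2
    simp only [hNdef, if_neg h1, if_neg h2]
  have ecol : ∀ i j, j ≠ j1 → j ≠ j2 → N i j = M i j := by
    intro i j h1 h2
    by_cases hi1 : i = i1
    · subst hi1
      simp only [hNdef, if_pos rfl]
      rw [Function.update_of_ne h2, Function.update_of_ne h1]
    · by_cases hi2 : i = i2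
      · subst hi2
        simp only [hNdef, if_neg hi1, eq_self_iff_true, if_true]
        rw [Function.update_of_ne h2, Function.update_of_ne h1]
      · rw [erow i hi1 hi2]
  -- margins of P
  have hr0 : (P 0 0 : ℕ) + (P 0 1 : ℕ) = (M i1 j1 : ℕ) + (M i1 j2 : ℕ) := by
    have := hrow2 0
    simpa [Fin.sum_univ_two] using this
  have hr1 : (P 1 0 : ℕ) + (P 1 1 : ℕ) = (M i2 j1 : ℕ) + (M i2 j2 : ℕ) := by
    have := hrow2 1
    simpa [Fin.sum_univ_two] using this
  have hc0 : (P 0 0 : ℕ) + (P 1 0 : ℕ) = (M i1 j1 : ℕ) + (M i2 j1 : ℕ) := by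
    have := hcol2 0
    simpa [Fin.sum_univ_two] using this
  have hc1 : (P 0 1 : ℕ) + (P 1 1 : ℕ) = (M i1 j2 : ℕ) + (M i2 j2 : ℕ) := by
    have := hcol2 1
    simpa [Fin.sum_univ_two] using this
  -- row sums of N
  have hrowN : ∀ i, ∑ j, (N i j : ℕ) = ∑ j, (M i j : ℕ) := by
    intro i
    by_cases hi1 : i = i1
    · rw [hi1]
      rw [sum_split_two (fun j => (N i1 j : ℕ)) j1 j2 hjj,
          sum_split_two (fun j => (M i1 j : ℕ)) j1 j2 hjj]
      have hrest : ∑ x ∈ (Finset.univ.erase j1).erase j2, (N i1 x : ℕ)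
          = ∑ x ∈ (Finset.univ.erase j1).erase j2, (M i1 x : ℕ) := by
        apply Finset.sum_congr rfl
        intro x hx
        simp only [Finset.mem_erase] at hx
        rw [ecol i1 x hx.2.1 hx.1]
      rw [hrest, e11, e12]
      omega
    · by_cases hi2 : i = i2
      · rw [hi2]
        rw [sum_split_two (fun j => (N i2 j : ℕ)) j1 j2 hjj,
            sum_split_two (fun j => (M i2 j : ℕ)) j1 j2 hjj]
        have hrest : ∑ x ∈ (Finset.univ.erase j1).erase j2, (N i2 x : ℕ)
            = ∑ x ∈ (Finset.univ.erase j1).erase j2, (M i2 x : ℕ) := by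
          apply Finset.sum_congr rfl
          intro x hx
          simp only [Finset.mem_erase] at hx
          rw [ecol i2 x hx.2.1 hx.1]
        rw [hrest, e21, e22]
        omega
      · rw [erow i hi1 hi2]
  have hcolN : ∀ j, ∑ i, (N i j : ℕ) = ∑ i, (M i j : ℕ) := by
    intro j
    by_cases hj1 : j = j1
    · rw [hj1]
      rw [sum_split_two (fun i => (N i j1 : ℕ)) i1 i2 hii,
          sum_split_two (fun i => (M i j1 : ℕ)) i1 i2 hii]
      have hrest : ∑ x ∈ (Finset.univ.erase i1).erase i2, (N x j1 : ℕ)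
          = ∑ x ∈ (Finset.univ.erase i1).erase i2, (M x j1 : ℕ) := by
        apply Finset.sum_congr rfl
        intro x hx
        simp only [Finset.mem_erase] at hx
        rw [erow x hx.2.1 hx.1]
      rw [hrest, e11, e21]
      omega
    · by_cases hj2 : j = j2
      · rw [hj2]
        rw [sum_split_two (fun i => (N i j2 : ℕ)) i1 i2 hii,
            sum_split_two (fun i => (M i j2 : ℕ)) i1 i2 hii]
        have hrest : ∑ x ∈ (Finset.univ.erase i1).erase i2, (N x j2 : ℕ)
            = ∑ x ∈ (Finset.univ.erase i1).erase i2, (M x j2 : ℕ) := by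
          apply Finset.sum_congr rfl
          intro x hx
          simp only [Finset.mem_erase] at hx
          rw [erow x hx.2.1 hx.1]
        rw [hrest, e12, e22]
        omega
      · apply Finset.sum_congr rfl
        intro x _
        rw [ecol x j hj1 hj2]
  have hNM := hM N hrowN hcolN
  have h00 : P 0 0 = M i1 j1 := by rw [← e11, hNM]
  have h01 : P 0 1 = M i1 j2 := by rw [← e12, hNM]
  have h10 : P 1 0 = M i2 j1 := by rw [← e21, hNM]
  have h11 : P 1 1 = M i2 j2 := by rw [← e22, hNM]
  funext x y
  fin_cases x <;> fin_cases y
  · exact h00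
  · exact h01
  · exact h10
  · exact h11

/-- For `q ≥ 2`: a `q`-ary matrix is lonesum iff all of its `2×2` submatrices are
lonesum; consequently every minimal non-lonesum `q`-ary matrix has size `2×2`. -/
theorem qary_lonesum_iff_two_by_two_and_minimal (q : ℕ) (hq : 2 ≤ q) :
    (∀ (m n : ℕ) (M : Fin m → Fin n → Fin q),
      IsLonesum M ↔
        ∀ (i1 i2 : Fin m) (j1 j2 : Fin n), i1 < i2 → j1 < j2 →
          IsLonesum ![![M i1 j1, M i1 j2], ![M i2 j1, M i2 j2]])
    ∧
    (∀ (m n : ℕ) (M : Fin m → Fin n → Fin q),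
      ¬ IsLonesum M →
      (∀ (k l : ℕ) (r : Fin k → Fin m) (c : Fin l → Fin n),
        StrictMono r → StrictMono c → (k < m ∨ l < n) →
        IsLonesum (fun a b => M (r a) (c b))) →
      m = 2 ∧ n = 2) := by
  constructor
  · intro m n M
    constructor
    · intro hM i1 i2 j1 j2 hi hj
      exact two_by_two_of_lonesum M hM i1 i2 j1 j2 hi hj
    · intro h2
      exact lonesum_of_two_by_two hq M h2
  · intro m n M hnl hprop
    have hbad : ¬ ∀ (i1 i2 : Fin m) (j1 j2 : Fin n), i1 < i2 → j1 < j2 →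
        IsLonesum ![![M i1 j1, M i1 j2], ![M i2 j1, M i2 j2]] :=
      fun h => hnl (lonesum_of_two_by_two hq M h)
    push_neg at hbad
    obtain ⟨i1, i2, j1, j2, hi, hj, hbad⟩ := hbad
    have hm2 : 2 ≤ m := by
      have h1 : (i1 : ℕ) < (i2 : ℕ) := hi
      have h2 := i2.isLt
      omega
    have hn2 : 2 ≤ n := by
      have h1 : (j1 : ℕ) < (j2 : ℕ) := hj
      have h2 := j2.isLt
      omega
    have hrmono : StrictMono ![i1, i2] := by
      intro a b hab
      fin_cases a <;> fin_cases b
      · exact absurd hab (by decide)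
      · exact hi
      · exact absurd hab (by decide)
      · exact absurd hab (by decide)
    have hcmono : StrictMono ![j1, j2] := by
      intro a b hab
      fin_cases a <;> fin_cases b
      · exact absurd hab (by decide)
      · exact hj
      · exact absurd hab (by decide)
      · exact absurd hab (by decide)
    have hmat : (fun a b => M (![i1, i2] a) (![j1, j2] b))
        = ![![M i1 j1, M i1 j2], ![M i2 j1, M i2 j2]] := by
      funext a b
      fin_cases a <;> fin_cases b <;> rfl
    constructor
    · by_contra hm
      have hm' : 2 < m := by omega
      have := hprop 2 2 ![i1, i2] ![j1, j2] hrmono hcmono (Or.inl hm')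
      rw [hmat] at this
      exact hbad this
    · by_contra hn
      have hn' : 2 < n := by omega
      have := hprop 2 2 ![i1, i2] ![j1, j2] hrmono hcmono (Or.inr hn')
      rw [hmat] at this
      exact hbad this
end

section
/- For every integer n ≥ 3, let M^n be the 5-ary n×n matrix defined by: M^n_{i,i} = 0 for 1 ≤ i ≤ n; M^n_{i,i+1} = 1 for 1 ≤ i ≤ n−1; M^n_{n,1} = 1; M^n_{i,j} = 3 for all i, j with i ≤ j−2; M^n_{i,1} = 4 for 2 ≤ i ≤ n−1; and M^n_{i,j} = 2 for all i, j with 2 ≤ j < i ≤ n. Then M^n is not a weak lonesum matrix, while every proper submatrix of M^n is a weak lonesum matrix. -/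
/-- A `q`-ary `m×n` matrix `M` is a weak lonesum matrix if it is uniquely determined
by the structure vectors of its rows and columns (the structure vector of a vector
records, for each value `v`, the number of coordinates equal to `v`). -/
def IsWeakLonesum {q m n : ℕ} (M : Fin m → Fin n → Fin q) : Prop :=
  ∀ N : Fin m → Fin n → Fin q,
    (∀ (i : Fin m) (v : Fin q),
      (Finset.univ.filter fun j => N i j = v).card =
        (Finset.univ.filter fun j => M i j = v).card) →
    (∀ (j : Fin n) (v : Fin q),
      (Finset.univ.filter fun i => N i j = v).card =
        (Finset.univ.filter fun i => M i j = v).card) →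
    N = M

/-- The `5`-ary `n×n` matrix `M^n` (indices here are 0-based; the paper's
`M^n_{i,j}` for `1 ≤ i,j ≤ n` corresponds to our indices `i-1, j-1`):
`0` on the diagonal, `1` on the superdiagonal and in position `(n,1)`,
`3` above (where `i ≤ j − 2`), `4` in the rest of the first column, and
`2` elsewhere below the diagonal. -/
def Mmat (n : ℕ) : Fin n → Fin n → Fin 5 := fun i j =>
  if i = j then 0
  else if (i : ℕ) + 1 = (j : ℕ) then 1
  else if (i : ℕ) = n - 1 ∧ (j : ℕ) = 0 then 1
  else if (i : ℕ) + 2 ≤ (j : ℕ) then 3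
  else if (j : ℕ) = 0 then 4
  else 2

open Finset


section gen
variable {k l : ℕ}

lemma forced_dec (P Q : Fin k → Fin l → Prop) [∀ a b, Decidable (P a b)]
    [∀ a b, Decidable (Q a b)]
    (hmono : ∀ (a a' : Fin k) (b : Fin l), a ≤ a' → P a' b → P a b)
    (hrow : ∀ a, (univ.filter fun b => Q a b).card = (univ.filter fun b => P a b).card)
    (hcol : ∀ b, (univ.filter fun a => Q a b).card = (univ.filter fun a => P a b).card) :
    ∀ a b, Q a b ↔ P a b := by
  suffices H : ∀ m : ℕ, ∀ a : Fin k, (a : ℕ) = m → ∀ b, (Q a b ↔ P a b) by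
    intro a b; exact H a a rfl b
  intro m
  induction m using Nat.strong_induction_on with
  | _ m IH =>
    intro a ham
    have hnot : ∀ b, ¬ P a b → ¬ Q a b := by
      intro b hP hQ
      have hsub : (univ.filter fun a' => P a' b) ⊆ (univ.filter fun a' => Q a' b).erase a := by
        intro a' ha'
        simp only [mem_filter, mem_univ, true_and] at ha'
        have hlt : a' < a := by
          rcases lt_or_ge a' a with h | h
          · exact h
          · exact absurd (hmono a a' b h ha') hP
        refine Finset.mem_erase.mpr ⟨Fin.ne_of_lt hlt, ?_⟩
        simp only [mem_filter, mem_univ, true_and]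
        exact (IH a' (by omega) a' rfl b).mpr ha'
      have hmem : a ∈ (univ.filter fun a' => Q a' b) := by
        simp only [mem_filter, mem_univ, true_and]; exact hQ
      have h1 := Finset.card_le_card hsub
      rw [Finset.card_erase_of_mem hmem] at h1
      have h2 := hcol b
      have h3 : 0 < (univ.filter fun a' => Q a' b).card := Finset.card_pos.mpr ⟨a, hmem⟩
      omega
    have hsub2 : (univ.filter fun b => Q a b) ⊆ (univ.filter fun b => P a b) := by
      intro b hb
      simp only [mem_filter, mem_univ, true_and] at hb ⊢
      by_contra hP
      exact hnot b hP hb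
    have heq := Finset.eq_of_subset_of_card_le hsub2 (le_of_eq (hrow a).symm)
    intro b
    constructor
    · intro hQ
      have : b ∈ (univ.filter fun b => Q a b) := by simp [hQ]
      rw [heq] at this
      simpa using this
    · intro hP
      have : b ∈ (univ.filter fun b => P a b) := by simp [hP]
      rw [← heq] at this
      simpa using this

lemma card_filter_rev (p : Fin k → Prop) [DecidablePred p] :
    (univ.filter fun a : Fin k => p a.rev).card = (univ.filter p).card := by
  apply Finset.card_bij' (fun (a : Fin k) _ => a.rev) (fun (a : Fin k) _ => a.rev) <;>
    simp [Fin.rev_rev]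

lemma forced_inc (P Q : Fin k → Fin l → Prop) [∀ a b, Decidable (P a b)]
    [∀ a b, Decidable (Q a b)]
    (hmono : ∀ (a a' : Fin k) (b : Fin l), a ≤ a' → P a b → P a' b)
    (hrow : ∀ a, (univ.filter fun b => Q a b).card = (univ.filter fun b => P a b).card)
    (hcol : ∀ b, (univ.filter fun a => Q a b).card = (univ.filter fun a => P a b).card) :
    ∀ a b, Q a b ↔ P a b := by
  intro a b
  have := forced_dec (fun a b => P a.rev b) (fun a b => Q a.rev b)
    (fun a a' b hle hP => hmono _ _ b (Fin.rev_le_rev.mpr hle) hP)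
    (fun a => hrow a.rev)
    (fun b => by rw [card_filter_rev (fun a => Q a b), card_filter_rev (fun a => P a b)]; exact hcol b)
    a.rev b
  simpa [Fin.rev_rev] using this

lemma forced_col (P Q : Fin k → Fin l → Prop) [∀ a b, Decidable (P a b)]
    [∀ a b, Decidable (Q a b)] (b0 : Fin l)
    (hP : ∀ a b, P a b → b = b0)
    (hrow : ∀ a, (univ.filter fun b => Q a b).card = (univ.filter fun b => P a b).card)
    (hcol : ∀ b, (univ.filter fun a => Q a b).card = (univ.filter fun a => P a b).card) :
    ∀ a b, Q a b ↔ P a b := by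
  have hQ : ∀ a b, Q a b → b = b0 := by
    intro a b hQb
    by_contra hne
    have hempty : (univ.filter fun a' => P a' b) = ∅ := by
      apply Finset.filter_eq_empty_iff.mpr
      intro a' _ hP'
      exact hne (hP a' b hP')
    have hc := hcol b
    rw [hempty, Finset.card_empty, Finset.card_eq_zero, Finset.filter_eq_empty_iff] at hc
    exact hc (Finset.mem_univ a) hQb
  intro a
  have hsQ : (univ.filter fun b => Q a b) ⊆ {b0} := by
    intro b hb
    simp only [mem_filter, mem_univ, true_and] at hb
    simp [hQ a b hb]
  have hsP : (univ.filter fun b => P a b) ⊆ {b0} := by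
    intro b hb
    simp only [mem_filter, mem_univ, true_and] at hb
    simp [hP a b hb]
  have heq : (univ.filter fun b => Q a b) = (univ.filter fun b => P a b) := by
    have hra := hrow a
    rcases Finset.subset_singleton_iff.mp hsQ with h1 | h1 <;>
      rcases Finset.subset_singleton_iff.mp hsP with h2 | h2 <;>
      rw [h1, h2] <;> rw [h1, h2] at hra <;> simp at hra
  intro b
  constructor
  · intro hQb
    have : b ∈ (univ.filter fun b => P a b) := heq ▸ (by simp [hQb])
    simpa using this
  · intro hPb
    have : b ∈ (univ.filter fun b => Q a b) := heq ▸ (by simp [hPb])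
    simpa using this

lemma helper2 (A N : Fin k → Fin l → Fin 5) (a : Fin k) (b0 b1 : Fin l)
    (h01 : ∀ b, (N a b = 0 ∨ N a b = 1) ↔ (A a b = 0 ∨ A a b = 1))
    (hcard : (univ.filter fun b => N a b = 0).card = (univ.filter fun b => A a b = 0).card)
    (hA0 : A a b0 = 0) (hA1 : A a b1 = 1)
    (huniq0 : ∀ b, A a b = 0 → b = b0)
    (huniq1 : ∀ b, A a b = 1 → b = b1) :
    (N a b0 = 0 ∧ N a b1 = 1) ∨ (N a b0 = 1 ∧ N a b1 = 0) := by
  have hb01 : b0 ≠ b1 := by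
    intro h; rw [h, hA1] at hA0; exact absurd hA0 (by decide)
  have hfA : (univ.filter fun b => A a b = 0) = {b0} := by
    ext b
    simp only [mem_filter, mem_univ, true_and, mem_singleton]
    exact ⟨huniq0 b, fun h => h ▸ hA0⟩
  rw [hfA, Finset.card_singleton] at hcard
  obtain ⟨x, hx⟩ := Finset.card_eq_one.mp hcard
  have hmemN : ∀ b, N a b = 0 ↔ b = x := by
    intro b
    constructor
    · intro h
      have : b ∈ (univ.filter fun b => N a b = 0) := by simp [h]
      rw [hx] at this; simpa using this
    · intro h
      rw [h]
      have : x ∈ (univ.filter fun b => N a b = 0) := by rw [hx]; simp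
      simpa using this
  have hxcase : x = b0 ∨ x = b1 := by
    have hNx : N a x = 0 := (hmemN x).mpr rfl
    have := (h01 x).mp (Or.inl hNx)
    rcases this with h | h
    · exact Or.inl (huniq0 x h)
    · exact Or.inr (huniq1 x h)
  have hN1mem : N a b1 = 0 ∨ N a b1 = 1 := (h01 b1).mpr (Or.inr hA1)
  have hN0mem : N a b0 = 0 ∨ N a b0 = 1 := (h01 b0).mpr (Or.inl hA0)
  rcases hxcase with rfl | rfl
  · left
    refine ⟨(hmemN x).mpr rfl, ?_⟩
    rcases hN1mem with h | h
    · exact absurd ((hmemN b1).mp h) (Ne.symm hb01)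
    · exact h
  · right
    refine ⟨?_, (hmemN x).mpr rfl⟩
    rcases hN0mem with h | h
    · exact absurd ((hmemN b0).mp h) hb01
    · exact h

lemma helper1a (A N : Fin k → Fin l → Fin 5) (a : Fin k) (b0 : Fin l)
    (h01 : ∀ b, (N a b = 0 ∨ N a b = 1) ↔ (A a b = 0 ∨ A a b = 1))
    (hcard : (univ.filter fun b => N a b = 0).card = (univ.filter fun b => A a b = 0).card)
    (hA0 : A a b0 = 0)
    (huniq0 : ∀ b, A a b = 0 → b = b0)
    (hno1 : ∀ b, A a b ≠ 1) :
    N a b0 = 0 := by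
  have hfA : (univ.filter fun b => A a b = 0) = {b0} := by
    ext b
    simp only [mem_filter, mem_univ, true_and, mem_singleton]
    exact ⟨huniq0 b, fun h => h ▸ hA0⟩
  rw [hfA, Finset.card_singleton] at hcard
  obtain ⟨x, hx⟩ := Finset.card_eq_one.mp hcard
  have hNx : N a x = 0 := by
    have : x ∈ (univ.filter fun b => N a b = 0) := by rw [hx]; simp
    simpa using this
  have hxb0 : x = b0 := by
    rcases (h01 x).mp (Or.inl hNx) with h | h
    · exact huniq0 x h
    · exact absurd h (hno1 x)
  rwa [hxb0] at hNx

lemma helper1b (A N : Fin k → Fin l → Fin 5) (a : Fin k) (b1 : Fin l)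
    (h01 : ∀ b, (N a b = 0 ∨ N a b = 1) ↔ (A a b = 0 ∨ A a b = 1))
    (hcard : (univ.filter fun b => N a b = 0).card = (univ.filter fun b => A a b = 0).card)
    (hA1 : A a b1 = 1)
    (hno0 : ∀ b, A a b ≠ 0) :
    N a b1 = 1 := by
  have hfA : (univ.filter fun b => A a b = 0) = ∅ := by
    apply Finset.filter_eq_empty_iff.mpr
    intro b _
    exact hno0 b
  rw [hfA, Finset.card_empty, Finset.card_eq_zero, Finset.filter_eq_empty_iff] at hcard
  have hN := hcard (Finset.mem_univ b1)
  rcases (h01 b1).mpr (Or.inr hA1) with h | h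
  · exact absurd h hN
  · exact h

lemma Mchar0 (n : ℕ) (hn : 3 ≤ n) (i j : Fin n) : Mmat n i j = 0 ↔ (i:ℕ) = j := by
  have hi := i.isLt; have hj := j.isLt
  unfold Mmat
  split_ifs with h1 h2 h3 h4 h5 <;> simp only [Fin.ext_iff] at h1 ⊢ <;>
    constructor <;> intro h'' <;>
    first | omega | (exact absurd h'' (by decide)) | rfl | trivial

lemma Mchar1 (n : ℕ) (hn : 3 ≤ n) (i j : Fin n) :
    Mmat n i j = 1 ↔ ((i:ℕ)+1 = (j:ℕ) ∨ ((i:ℕ) = n-1 ∧ (j:ℕ) = 0)) := by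
  have hi := i.isLt; have hj := j.isLt
  unfold Mmat
  split_ifs with h1 h2 h3 h4 h5 <;> simp only [Fin.ext_iff] at h1 ⊢ <;>
    constructor <;> intro h'' <;>
    first | omega | (exact absurd h'' (by decide)) | rfl | trivial

lemma Mchar2 (n : ℕ) (hn : 3 ≤ n) (i j : Fin n) :
    Mmat n i j = 2 ↔ (1 ≤ (j:ℕ) ∧ (j:ℕ) < (i:ℕ)) := by
  have hi := i.isLt; have hj := j.isLt
  unfold Mmat
  split_ifs with h1 h2 h3 h4 h5 <;> simp only [Fin.ext_iff] at h1 ⊢ <;>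
    constructor <;> intro h'' <;>
    first | omega | (exact absurd h'' (by decide)) | rfl | trivial

lemma Mchar3 (n : ℕ) (hn : 3 ≤ n) (i j : Fin n) :
    Mmat n i j = 3 ↔ (i:ℕ)+2 ≤ (j:ℕ) := by
  have hi := i.isLt; have hj := j.isLt
  unfold Mmat
  split_ifs with h1 h2 h3 h4 h5 <;> simp only [Fin.ext_iff] at h1 ⊢ <;>
    constructor <;> intro h'' <;>
    first | omega | (exact absurd h'' (by decide)) | rfl | trivial

lemma Mchar4 (n : ℕ) (hn : 3 ≤ n) (i j : Fin n) :
    Mmat n i j = 4 ↔ ((j:ℕ) = 0 ∧ (i:ℕ) ≠ 0 ∧ (i:ℕ) ≠ n-1) := by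
  have hi := i.isLt; have hj := j.isLt
  unfold Mmat
  split_ifs with h1 h2 h3 h4 h5 <;> simp only [Fin.ext_iff] at h1 ⊢ <;>
    constructor <;> intro h'' <;>
    first | omega | (exact absurd h'' (by decide)) | rfl | trivial

-- row/column singleton facts
lemma row0_eq (n : ℕ) (hn : 3 ≤ n) (i : Fin n) :
    (univ.filter fun j => Mmat n i j = 0) = {i} := by
  ext j
  simp only [mem_filter, mem_univ, true_and, mem_singleton, Mchar0 n hn, Fin.ext_iff]
  omega

lemma row1_eq (n : ℕ) (hn : 3 ≤ n) (i : Fin n) :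
    ∃ j0 : Fin n, (univ.filter fun j => Mmat n i j = 1) = {j0} := by
  by_cases h : (i:ℕ) = n - 1
  · refine ⟨⟨0, by omega⟩, ?_⟩
    ext j
    have hi := i.isLt; have hj := j.isLt
    simp only [mem_filter, mem_univ, true_and, mem_singleton, Mchar1 n hn, Fin.ext_iff]
    omega
  · refine ⟨⟨(i:ℕ)+1, by have := i.isLt; omega⟩, ?_⟩
    ext j
    have hi := i.isLt; have hj := j.isLt
    simp only [mem_filter, mem_univ, true_and, mem_singleton, Mchar1 n hn, Fin.ext_iff]
    omega

lemma col0_eq (n : ℕ) (hn : 3 ≤ n) (j : Fin n) :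
    (univ.filter fun i => Mmat n i j = 0) = {j} := by
  ext i
  simp only [mem_filter, mem_univ, true_and, mem_singleton, Mchar0 n hn, Fin.ext_iff]

lemma col1_eq (n : ℕ) (hn : 3 ≤ n) (j : Fin n) :
    ∃ i0 : Fin n, (univ.filter fun i => Mmat n i j = 1) = {i0} := by
  by_cases h : (j:ℕ) = 0
  · refine ⟨⟨n-1, by omega⟩, ?_⟩
    ext i
    have hi := i.isLt; have hj := j.isLt
    simp only [mem_filter, mem_univ, true_and, mem_singleton, Mchar1 n hn, Fin.ext_iff]
    omega
  · refine ⟨⟨(j:ℕ)-1, by have := j.isLt; omega⟩, ?_⟩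
    ext i
    have hi := i.isLt; have hj := j.isLt
    simp only [mem_filter, mem_univ, true_and, mem_singleton, Mchar1 n hn, Fin.ext_iff]
    omega

-- Part 1
lemma part1 (n : ℕ) (hn : 3 ≤ n) :
    ∃ N : Fin n → Fin n → Fin 5,
      (∀ (i : Fin n) (v : Fin 5),
        (Finset.univ.filter fun j => N i j = v).card =
          (Finset.univ.filter fun j => Mmat n i j = v).card) ∧
      (∀ (j : Fin n) (v : Fin 5),
        (Finset.univ.filter fun i => N i j = v).card =
          (Finset.univ.filter fun i => Mmat n i j = v).card) ∧
      N ≠ Mmat n := by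
  classical
  set M := Mmat n with hM
  have key0 : ∀ x : Fin 5, ((if x = 0 then (1:Fin 5) else if x = 1 then 0 else x) = 0) ↔ x = 1 := by decide
  have key1 : ∀ x : Fin 5, ((if x = 0 then (1:Fin 5) else if x = 1 then 0 else x) = 1) ↔ x = 0 := by decide
  have keyv : ∀ x v : Fin 5, v ≠ 0 → v ≠ 1 →
      (((if x = 0 then (1:Fin 5) else if x = 1 then 0 else x) = v) ↔ x = v) := by decide
  refine ⟨fun i j => if M i j = 0 then 1 else if M i j = 1 then 0 else M i j, ?_, ?_, ?_⟩
  · intro i v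
    by_cases hv0 : v = 0
    · subst hv0
      have h1 : (univ.filter fun j =>
          (if M i j = 0 then (1:Fin 5) else if M i j = 1 then 0 else M i j) = 0)
          = univ.filter (fun j => M i j = 1) :=
        filter_congr (fun j _ => key0 (M i j))
      rw [h1, row0_eq n hn i]
      obtain ⟨j0, hj0⟩ := row1_eq n hn i
      rw [hj0]
      simp
    · by_cases hv1 : v = 1
      · subst hv1
        have h1 : (univ.filter fun j =>
            (if M i j = 0 then (1:Fin 5) else if M i j = 1 then 0 else M i j) = 1)
            = univ.filter (fun j => M i j = 0) :=
          filter_congr (fun j _ => key1 (M i j))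
        rw [h1, row0_eq n hn i]
        obtain ⟨j0, hj0⟩ := row1_eq n hn i
        rw [hj0]
        simp
      simp
      · have h1 : (univ.filter fun j =>
            (if M i j = 0 then (1:Fin 5) else if M i j = 1 then 0 else M i j) = v)
            = univ.filter (fun j => M i j = v) :=
          filter_congr (fun j _ => keyv (M i j) v hv0 hv1)
        rw [h1]
  · intro j v
    by_cases hv0 : v = 0
    · subst hv0
      have h1 : (univ.filter fun i =>
          (if M i j = 0 then (1:Fin 5) else if M i j = 1 then 0 else M i j) = 0)
          = univ.filter (fun i => M i j = 1) :=
        filter_congr (fun i _ => key0 (M i j))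
      rw [h1, col0_eq n hn j]
      obtain ⟨i0, hi0⟩ := col1_eq n hn j
      rw [hi0]
      simp
    · by_cases hv1 : v = 1
      · subst hv1
        have h1 : (univ.filter fun i =>
            (if M i j = 0 then (1:Fin 5) else if M i j = 1 then 0 else M i j) = 1)
            = univ.filter (fun i => M i j = 0) :=
          filter_congr (fun i _ => key1 (M i j))
        rw [h1, col0_eq n hn j]
        obtain ⟨i0, hi0⟩ := col1_eq n hn j
        rw [hi0]
        simp
      simp
      · have h1 : (univ.filter fun i =>
            (if M i j = 0 then (1:Fin 5) else if M i j = 1 then 0 else M i j) = v)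
            = univ.filter (fun i => M i j = v) :=
          filter_congr (fun i _ => keyv (M i j) v hv0 hv1)
        rw [h1]
  · intro h
    have h0 : (0:ℕ) < n := by omega
    have hd : M ⟨0, h0⟩ ⟨0, h0⟩ = 0 := (Mchar0 n hn _ _).mpr rfl
    have := congrFun (congrFun h ⟨0, h0⟩) ⟨0, h0⟩
    rw [hd] at this
    exact absurd this (by decide)


lemma part2 (n : ℕ) (hn : 3 ≤ n) {k l : ℕ} (r : Fin k → Fin n) (c : Fin l → Fin n)
    (hr : StrictMono r) (hc : StrictMono c)
    (i0 : ℕ) (hi0 : i0 < n)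
    (hmiss : ∀ (a : Fin k) (b : Fin l), (r a : ℕ) = i0 → (c b : ℕ) = i0 → False) :
    IsWeakLonesum (fun a b => Mmat n (r a) (c b)) := by
  classical
  intro N hrowN hcolN
  -- values 3
  have hv3 : ∀ a b, N a b = 3 ↔ Mmat n (r a) (c b) = 3 := by
    refine forced_dec (fun a b => Mmat n (r a) (c b) = 3) (fun a b => N a b = 3) ?_
      (fun a => hrowN a 3) (fun b => hcolN b 3)
    intro a a' b hle h
    rw [Mchar3 n hn] at h ⊢
    have := hr.monotone hle
    rw [Fin.le_def] at this
    omega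
  -- values 2
  have hv2 : ∀ a b, N a b = 2 ↔ Mmat n (r a) (c b) = 2 := by
    refine forced_inc (fun a b => Mmat n (r a) (c b) = 2) (fun a b => N a b = 2) ?_
      (fun a => hrowN a 2) (fun b => hcolN b 2)
    intro a a' b hle h
    rw [Mchar2 n hn] at h ⊢
    have := hr.monotone hle
    rw [Fin.le_def] at this
    omega
  -- values 4
  have hv4 : ∀ a b, N a b = 4 ↔ Mmat n (r a) (c b) = 4 := by
    rcases Nat.eq_zero_or_pos l with hl | hl
    · intro a b; exact absurd b.isLt (by omega)
    · by_cases hex : ∃ b0 : Fin l, (c b0 : ℕ) = 0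
      · obtain ⟨b0, hb0⟩ := hex
        refine forced_col (fun a b => Mmat n (r a) (c b) = 4) (fun a b => N a b = 4) b0 ?_
          (fun a => hrowN a 4) (fun b => hcolN b 4)
        intro a b h
        rw [Mchar4 n hn] at h
        exact hc.injective (Fin.ext (by omega))
      · refine forced_col (fun a b => Mmat n (r a) (c b) = 4) (fun a b => N a b = 4)
          ⟨0, hl⟩ ?_ (fun a => hrowN a 4) (fun b => hcolN b 4)
        intro a b h
        rw [Mchar4 n hn] at h
        exact absurd ⟨b, h.1⟩ hex
  -- 0/1 membership
  have h01 : ∀ a b, (N a b = 0 ∨ N a b = 1) ↔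
      (Mmat n (r a) (c b) = 0 ∨ Mmat n (r a) (c b) = 1) := by
    have hfv : ∀ v : Fin 5, (v = 0 ∨ v = 1) ↔ ¬(v = 2 ∨ v = 3 ∨ v = 4) := by decide
    intro a b
    rw [hfv, hfv]
    exact not_congr (or_congr (hv2 a b) (or_congr (hv3 a b) (hv4 a b)))
  -- step lemmas around the cycle
  have S1 : ∀ i j : ℕ, i < n → j = (i+1) % n →
      (∀ (a : Fin k) (b : Fin l), (r a:ℕ) = i → (c b:ℕ) = i → N a b = 0) →
      (∀ (a : Fin k) (b : Fin l), (r a:ℕ) = i → (c b:ℕ) = j → N a b = 1) := by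
    intro i j hi hj hD a b hra hcb
    have hjcase : (i+1 < n ∧ j = i+1) ∨ (i = n-1 ∧ j = 0) := by
      rcases Nat.lt_or_ge (i+1) n with h | h
      · left; exact ⟨h, by rw [hj, Nat.mod_eq_of_lt h]⟩
      · right
        have hin : i = n - 1 := by omega
        refine ⟨hin, ?_⟩
        rw [hj, show i + 1 = n by omega, Nat.mod_self]
    have hbl := (c b).isLt
    have hal := (r a).isLt
    have hA1 : Mmat n (r a) (c b) = 1 := by
      rw [Mchar1 n hn]; omega
    by_cases hex : ∃ b0 : Fin l, (c b0 : ℕ) = i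
    · obtain ⟨b0, hb0⟩ := hex
      have hN0 : N a b0 = 0 := hD a b0 hra hb0
      have hA0 : Mmat n (r a) (c b0) = 0 := by rw [Mchar0 n hn]; omega
      have huniq0 : ∀ b', Mmat n (r a) (c b') = 0 → b' = b0 := by
        intro b' h'
        rw [Mchar0 n hn] at h'
        exact hc.injective (Fin.ext (by omega))
      have huniq1 : ∀ b', Mmat n (r a) (c b') = 1 → b' = b := by
        intro b' h'
        rw [Mchar1 n hn] at h'
        have := (c b').isLt
        exact hc.injective (Fin.ext (by omega))
      have hres := helper2 (fun a b => Mmat n (r a) (c b)) N a b0 b (h01 a) (hrowN a 0)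
        hA0 hA1 huniq0 huniq1
      rcases hres with ⟨_, h⟩ | ⟨h, _⟩
      · exact h
      · rw [hN0] at h; exact absurd h (by decide)
    · have hno0 : ∀ b', Mmat n (r a) (c b') ≠ 0 := by
        intro b' h'
        rw [Mchar0 n hn] at h'
        exact hex ⟨b', by omega⟩
      exact helper1b (fun a b => Mmat n (r a) (c b)) N a b (h01 a) (hrowN a 0) hA1 hno0
  have S2 : ∀ i j : ℕ, i < n → j = (i+1) % n →
      (∀ (a : Fin k) (b : Fin l), (r a:ℕ) = i → (c b:ℕ) = j → N a b = 1) →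
      (∀ (a : Fin k) (b : Fin l), (r a:ℕ) = j → (c b:ℕ) = j → N a b = 0) := by
    intro i j hi hj hT a0 b hra0 hcb
    have hjcase : (i+1 < n ∧ j = i+1) ∨ (i = n-1 ∧ j = 0) := by
      rcases Nat.lt_or_ge (i+1) n with h | h
      · left; exact ⟨h, by rw [hj, Nat.mod_eq_of_lt h]⟩
      · right
        have hin : i = n - 1 := by omega
        refine ⟨hin, ?_⟩
        rw [hj, show i + 1 = n by omega, Nat.mod_self]
    have hbl := (c b).isLt
    have ha0l := (r a0).isLt
    have hA0 : Mmat n (r a0) (c b) = 0 := by rw [Mchar0 n hn]; omega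
    have huniq0 : ∀ a', Mmat n (r a') (c b) = 0 → a' = a0 := by
      intro a' h'
      rw [Mchar0 n hn] at h'
      exact hr.injective (Fin.ext (by omega))
    by_cases hex : ∃ a1 : Fin k, (r a1 : ℕ) = i
    · obtain ⟨a1, ha1⟩ := hex
      have hN1 : N a1 b = 1 := hT a1 b ha1 hcb
      have hA1 : Mmat n (r a1) (c b) = 1 := by rw [Mchar1 n hn]; omega
      have huniq1 : ∀ a', Mmat n (r a') (c b) = 1 → a' = a1 := by
        intro a' h'
        rw [Mchar1 n hn] at h'
        have := (r a').isLt
        exact hr.injective (Fin.ext (by omega))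
      have hres := helper2 (fun b a => Mmat n (r a) (c b)) (fun b a => N a b) b a0 a1
        (fun a => h01 a b) (hcolN b 0) hA0 hA1 huniq0 huniq1
      rcases hres with ⟨h, _⟩ | ⟨_, h⟩
      · exact h
      · have h' : N a1 b = 0 := h
        rw [hN1] at h'
        exact absurd h' (by decide)
    · have hno1 : ∀ a', Mmat n (r a') (c b) ≠ 1 := by
        intro a' h'
        rw [Mchar1 n hn] at h'
        have := (r a').isLt
        exact hex ⟨a', by omega⟩
      exact helper1a (fun b a => Mmat n (r a) (c b)) (fun b a => N a b) b a0
        (fun a => h01 a b) (hcolN b 0) hA0 huniq0 hno1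
  -- main induction around the cycle
  have hnpos : 0 < n := by omega
  have key : ∀ s : ℕ,
      (∀ (a : Fin k) (b : Fin l), (r a:ℕ) = (i0+s) % n → (c b:ℕ) = (i0+s) % n → N a b = 0) ∧
      (∀ (a : Fin k) (b : Fin l), (r a:ℕ) = (i0+s) % n → (c b:ℕ) = (i0+s+1) % n → N a b = 1) := by
    intro s
    induction s with
    | zero =>
      have hD : ∀ (a : Fin k) (b : Fin l),
          (r a:ℕ) = (i0+0) % n → (c b:ℕ) = (i0+0) % n → N a b = 0 := by
        intro a b hra hcb
        rw [Nat.add_zero, Nat.mod_eq_of_lt hi0] at hra hcb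
        exact (hmiss a b hra hcb).elim
      refine ⟨hD, ?_⟩
      exact S1 ((i0+0) % n) ((i0+0+1) % n) (Nat.mod_lt _ hnpos) (by rw [Nat.mod_add_mod]) hD
    | succ s ih =>
      have hD : ∀ (a : Fin k) (b : Fin l),
          (r a:ℕ) = (i0+(s+1)) % n → (c b:ℕ) = (i0+(s+1)) % n → N a b = 0 := by
        have := S2 ((i0+s) % n) ((i0+s+1) % n) (Nat.mod_lt _ hnpos)
          (by rw [Nat.mod_add_mod]) ih.2
        exact fun a b h1 h2 => this a b h1 h2
      refine ⟨hD, ?_⟩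
      have := S1 ((i0+(s+1)) % n) ((i0+(s+1)+1) % n) (Nat.mod_lt _ hnpos)
        (by rw [Nat.mod_add_mod]) hD
      exact fun a b h1 h2 => this a b h1 h2
  have hall : ∀ i : ℕ, i < n →
      (∀ (a : Fin k) (b : Fin l), (r a:ℕ) = i → (c b:ℕ) = i → N a b = 0) ∧
      (∀ (a : Fin k) (b : Fin l), (r a:ℕ) = i → (c b:ℕ) = (i+1) % n → N a b = 1) := by
    intro i hi
    have hkey := key (i + n - i0)
    have hre : i0 + (i + n - i0) = i + n := by omega
    rw [hre] at hkey
    have h1 : (i + n) % n = i := by rw [Nat.add_mod_right]; exact Nat.mod_eq_of_lt hi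
    have h2 : (i + n + 1) % n = (i+1) % n := by
      rw [show i + n + 1 = (i+1) + n by omega, Nat.add_mod_right]
    rw [h1, h2] at hkey
    exact hkey
  -- conclude
  funext a b
  have hcases : ∀ v : Fin 5, v = 0 ∨ v = 1 ∨ v = 2 ∨ v = 3 ∨ v = 4 := by decide
  have hal := (r a).isLt
  have hbl := (c b).isLt
  rcases hcases (Mmat n (r a) (c b)) with h|h|h|h|h <;> rw [h]
  · have hv := (Mchar0 n hn _ _).mp h
    exact (hall (r a) hal).1 a b rfl (by omega)
  · have hv := (Mchar1 n hn _ _).mp h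
    rcases hv with hv | hv
    · refine (hall (r a) hal).2 a b rfl ?_
      rw [Nat.mod_eq_of_lt (by omega : (r a:ℕ)+1 < n)]
      omega
    · refine (hall (n-1) (by omega)).2 a b (by omega) ?_
      rw [show n-1+1 = n by omega, Nat.mod_self]
      omega
  · exact (hv2 a b).mpr h
  · exact (hv3 a b).mpr h
  · exact (hv4 a b).mpr h


/-- For `n ≥ 3`, the matrix `M^n` is not a weak lonesum matrix, while every proper
submatrix of `M^n` is a weak lonesum matrix. -/

theorem Mmat_not_weakLonesum_but_minimal (n : ℕ) (hn : 3 ≤ n) :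
    ¬ IsWeakLonesum (Mmat n) ∧
      ∀ (k l : ℕ) (r : Fin k → Fin n) (c : Fin l → Fin n),
        StrictMono r → StrictMono c → (k < n ∨ l < n) →
        IsWeakLonesum (fun a b => Mmat n (r a) (c b)) := by
  constructor
  · intro hWL
    obtain ⟨N, hrows, hcols, hne⟩ := part1 n hn
    exact hne (hWL N hrows hcols)
  · intro k l r c hr hc hkl
    rcases hkl with hk | hl
    · have hex : ∃ i0f : Fin n, ∀ a, r a ≠ i0f := by
        by_contra hcon
        push_neg at hcon
        have hsurj : Function.Surjective r := fun y => by
          obtain ⟨a, ha⟩ := hcon y; exact ⟨a, ha⟩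
        have := Fintype.card_le_of_surjective r hsurj
        simp only [Fintype.card_fin] at this
        omega
      obtain ⟨i0f, hi0f⟩ := hex
      refine part2 n hn r c hr hc (i0f : ℕ) i0f.isLt ?_
      intro a b hra _
      exact hi0f a (Fin.ext hra)
    · have hex : ∃ j0f : Fin n, ∀ b, c b ≠ j0f := by
        by_contra hcon
        push_neg at hcon
        have hsurj : Function.Surjective c := fun y => by
          obtain ⟨b, hb⟩ := hcon y; exact ⟨b, hb⟩
        have := Fintype.card_le_of_surjective c hsurj
        simp only [Fintype.card_fin] at this
        omega
      obtain ⟨j0f, hj0f⟩ := hex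
      refine part2 n hn r c hr hc (j0f : ℕ) j0f.isLt ?_
      intro a b _ hcb
      exact hj0f b (Fin.ext hcb)
end gen
end
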